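/- arXiv:2003.02180 — 10 statements merged into one kernel-verified Lean document; each statement's English description precedes it below -/
import Mathlib

section
/- Two matrix Fisher–Gaussian densities with parameter sets (μ, Σ, P, U, S, V) and (μ̃, Σ̃, P̃, Ũ, S̃, Ṽ) on SO(3)×ℝⁿ coincide at every point (R, x) ∈ SO(3)×ℝⁿ if and only if USVᵀ = ŨS̃Ṽᵀ, μ_c(R) = μ̃_c(R) for all R ∈ SO(3), and Σ_c = Σ̃_c. -/
open Matrix MeasureTheory Real

noncomputable section

abbrev Mat3 := Matrix (Fin 3) (Fin 3) ℝ

instance : MeasurableSpace Mat3 :=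
  show MeasurableSpace (Fin 3 → Fin 3 → ℝ) from inferInstance

/-- `SO(3)`: real 3×3 matrices with `RᵀR = I` and `det R = 1`. -/
def SO3 : Set Mat3 := {R | Rᵀ * R = 1 ∧ R.det = 1}

/-- The hat map `∧ : ℝ³ → ℝ^{3×3}`, `(hat v) w = v × w`. -/
def hat (v : Fin 3 → ℝ) : Mat3 :=
  !![0, -v 2, v 1; v 2, 0, -v 0; -v 1, v 0, 0]

/-- The vee map `∨`, inverse of the hat map on skew-symmetric matrices. -/
def vee (A : Mat3) : Fin 3 → ℝ := ![A 2 1, A 0 2, A 1 0]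

/-- `ν` is the bi-invariant Haar probability measure on `SO(3)`. -/
def IsHaarSO3 (ν : Measure Mat3) : Prop :=
  IsProbabilityMeasure ν ∧ ν SO3ᶜ = 0 ∧
    (∀ A ∈ SO3, Measure.map (fun R => A * R) ν = ν) ∧
    (∀ A ∈ SO3, Measure.map (fun R => R * A) ν = ν)

/-- The normalizing constant `c(F) = ∫_{SO(3)} etr(FᵀQ) dQ`. -/
def cF (ν : Measure Mat3) (F : Mat3) : ℝ := ∫ Q, Real.exp ((Fᵀ * Q).trace) ∂ν

/-- The tangent-space deviation `ν_R = (QS − SQᵀ)∨`, `Q = UᵀRV`. -/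
def nuR (U S V R : Mat3) : Fin 3 → ℝ :=
  vee ((Uᵀ * R * V) * S - S * (Uᵀ * R * V)ᵀ)

/-- `Σ_c = Σ − P(tr(S)I − S)Pᵀ`. -/
def sigmaC {n : ℕ} (Sig : Matrix (Fin n) (Fin n) ℝ) (P : Matrix (Fin n) (Fin 3) ℝ)
    (S : Mat3) : Matrix (Fin n) (Fin n) ℝ :=
  Sig - P * (S.trace • (1 : Mat3) - S) * Pᵀ

/-- The matrix Fisher–Gaussian density with parameters `(μ, Σ, P, U, S, V)`. -/
def mfg {n : ℕ} (ν : Measure Mat3) (μ : Fin n → ℝ) (Sig : Matrix (Fin n) (Fin n) ℝ)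
    (P : Matrix (Fin n) (Fin 3) ℝ) (U S V : Mat3) (R : Mat3) (x : Fin n → ℝ) : ℝ :=
  (cF ν (U * S * Vᵀ) * Real.sqrt ((2 * Real.pi) ^ n * (sigmaC Sig P S).det))⁻¹ *
    Real.exp (-(1/2) * ((x - (μ + P.mulVec (nuR U S V R))) ⬝ᵥ
      ((sigmaC Sig P S)⁻¹ *ᵥ (x - (μ + P.mulVec (nuR U S V R)))))) *
    Real.exp ((U * S * Vᵀ * Rᵀ).trace)


/-! ### Auxiliary lemmas -/

/-- Identification of quadratic forms: if two (shifted) quadratic forms with symmetric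
matrices differ by a constant, the matrices agree and the linear parts agree. -/
theorem quad_eq {n : ℕ} (A A' : Matrix (Fin n) (Fin n) ℝ) (hA : Aᵀ = A) (hA' : A'ᵀ = A')
    (m m' : Fin n → ℝ) (κ : ℝ)
    (h : ∀ x : Fin n → ℝ, (x - m) ⬝ᵥ (A *ᵥ (x - m)) = (x - m') ⬝ᵥ (A' *ᵥ (x - m')) + κ) :
    A = A' ∧ A *ᵥ m = A' *ᵥ m' := by
  have expand : ∀ (B : Matrix (Fin n) (Fin n) ℝ), Bᵀ = B → ∀ (w x : Fin n → ℝ),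
      (x - w) ⬝ᵥ (B *ᵥ (x - w)) =
        x ⬝ᵥ (B *ᵥ x) - 2 * (x ⬝ᵥ (B *ᵥ w)) + w ⬝ᵥ (B *ᵥ w) := by
    intro B hB w x
    have hsym : w ⬝ᵥ (B *ᵥ x) = x ⬝ᵥ (B *ᵥ w) := by
      rw [Matrix.dotProduct_mulVec, ← Matrix.mulVec_transpose, hB, dotProduct_comm]
    rw [Matrix.mulVec_sub, dotProduct_sub, sub_dotProduct, sub_dotProduct, hsym]
    ring
  have h2 : ∀ x : Fin n → ℝ,
      x ⬝ᵥ ((A - A') *ᵥ x) - 2 * (x ⬝ᵥ (A *ᵥ m - A' *ᵥ m'))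
        = κ + m' ⬝ᵥ (A' *ᵥ m') - m ⬝ᵥ (A *ᵥ m) := by
    intro x
    have := h x
    rw [expand A hA m x, expand A' hA' m' x] at this
    rw [Matrix.sub_mulVec, dotProduct_sub, dotProduct_sub]
    linarith
  set κ' := κ + m' ⬝ᵥ (A' *ᵥ m') - m ⬝ᵥ (A *ᵥ m) with hκ'
  have h0 : κ' = 0 := by
    have := h2 0
    simpa using this.symm
  rw [h0] at h2
  have hquad : ∀ x : Fin n → ℝ, x ⬝ᵥ ((A - A') *ᵥ x) = 0 := by
    intro x
    have h1 := h2 x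
    have h2' := h2 (-x)
    rw [Matrix.mulVec_neg, dotProduct_neg, neg_dotProduct, neg_neg, neg_dotProduct] at h2'
    linarith
  have hlin : ∀ x : Fin n → ℝ, x ⬝ᵥ (A *ᵥ m - A' *ᵥ m') = 0 := by
    intro x
    have h1 := h2 x
    have := hquad x
    linarith
  constructor
  · have hd : ∀ i j, Pi.single i (1:ℝ) ⬝ᵥ ((A - A') *ᵥ Pi.single j (1:ℝ)) = (A - A') i j := by
      intro i j
      rw [Matrix.mulVec_single, single_dotProduct]
      simp
    have hsymB : (A - A')ᵀ = A - A' := by rw [Matrix.transpose_sub, hA, hA']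
    have hdiag : ∀ i, (A - A') i i = 0 := by
      intro i; rw [← hd i i]; exact hquad _
    have hij : ∀ i j, (A - A') i j = 0 := by
      intro i j
      have hp := hquad (Pi.single i (1:ℝ) + Pi.single j (1:ℝ))
      rw [Matrix.mulVec_add, dotProduct_add, add_dotProduct, add_dotProduct,
        hd i i, hd i j, hd j i, hd j j, hdiag i, hdiag j] at hp
      have hs : (A - A') j i = (A - A') i j := by
        conv_lhs => rw [← hsymB]
        rw [Matrix.transpose_apply]
      rw [hs] at hp
      linarith
    have : A - A' = 0 := by ext i j; exact hij i j
    exact sub_eq_zero.mp this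
  · have : ∀ i, (A *ᵥ m - A' *ᵥ m') i = 0 := by
      intro i
      have := hlin (Pi.single i (1:ℝ))
      rwa [single_dotProduct, one_mul] at this
    have h0' : A *ᵥ m - A' *ᵥ m' = 0 := funext this
    exact sub_eq_zero.mp h0'

lemma tr3_aux (a b c d e f g h i : ℝ) :
    (!![a,b,c;d,e,f;g,h,i])ᵀ = !![a,d,g;b,e,h;c,f,i] := by
  ext x y; fin_cases x <;> fin_cases y <;> rfl

/-- If the linear functional `R ↦ tr (A Rᵀ)` is constant on `SO(3)`, then `A = 0`. -/
lemma trace_lin (A : Mat3) (k : ℝ) (h : ∀ R ∈ SO3, (A * Rᵀ).trace = k) : A = 0 := by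
  have mem : ∀ (a b c d e f g h i : ℝ),
      (!![a,d,g;b,e,h;c,f,i] : Mat3) * !![a,b,c;d,e,f;g,h,i] = 1 →
      (!![a,b,c;d,e,f;g,h,i] : Mat3).det = 1 →
      (!![a,b,c;d,e,f;g,h,i] : Mat3) ∈ SO3 := by
    intro a b c d e f g h' i h1 h2
    exact ⟨by rw [tr3_aux]; exact h1, h2⟩
  have e1 := h !![1,0,0;0,1,0;0,0,1] (mem 1 0 0 0 1 0 0 0 1
    (by ext x y; fin_cases x <;> fin_cases y <;> simp [Matrix.mul_apply, Fin.sum_univ_three, Matrix.one_apply, Matrix.vecHead, Matrix.vecTail]) (by norm_num [Matrix.det_fin_three, Matrix.cons_val_two]))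
  have e2 := h !![1,0,0;0,-1,0;0,0,-1] (mem 1 0 0 0 (-1) 0 0 0 (-1)
    (by ext x y; fin_cases x <;> fin_cases y <;> simp [Matrix.mul_apply, Fin.sum_univ_three, Matrix.one_apply, Matrix.vecHead, Matrix.vecTail]) (by norm_num [Matrix.det_fin_three, Matrix.cons_val_two]))
  have e3 := h !![-1,0,0;0,1,0;0,0,-1] (mem (-1) 0 0 0 1 0 0 0 (-1)
    (by ext x y; fin_cases x <;> fin_cases y <;> simp [Matrix.mul_apply, Fin.sum_univ_three, Matrix.one_apply, Matrix.vecHead, Matrix.vecTail]) (by norm_num [Matrix.det_fin_three, Matrix.cons_val_two]))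
  have e4 := h !![-1,0,0;0,-1,0;0,0,1] (mem (-1) 0 0 0 (-1) 0 0 0 1
    (by ext x y; fin_cases x <;> fin_cases y <;> simp [Matrix.mul_apply, Fin.sum_univ_three, Matrix.one_apply, Matrix.vecHead, Matrix.vecTail]) (by norm_num [Matrix.det_fin_three, Matrix.cons_val_two]))
  have e5 := h !![0,-1,0;1,0,0;0,0,1] (mem 0 (-1) 0 1 0 0 0 0 1
    (by ext x y; fin_cases x <;> fin_cases y <;> simp [Matrix.mul_apply, Fin.sum_univ_three, Matrix.one_apply, Matrix.vecHead, Matrix.vecTail]) (by norm_num [Matrix.det_fin_three, Matrix.cons_val_two]))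
  have e6 := h !![0,1,0;1,0,0;0,0,-1] (mem 0 1 0 1 0 0 0 0 (-1)
    (by ext x y; fin_cases x <;> fin_cases y <;> simp [Matrix.mul_apply, Fin.sum_univ_three, Matrix.one_apply, Matrix.vecHead, Matrix.vecTail]) (by norm_num [Matrix.det_fin_three, Matrix.cons_val_two]))
  have e7 := h !![1,0,0;0,0,-1;0,1,0] (mem 1 0 0 0 0 (-1) 0 1 0
    (by ext x y; fin_cases x <;> fin_cases y <;> simp [Matrix.mul_apply, Fin.sum_univ_three, Matrix.one_apply, Matrix.vecHead, Matrix.vecTail]) (by norm_num [Matrix.det_fin_three, Matrix.cons_val_two]))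
  have e8 := h !![-1,0,0;0,0,1;0,1,0] (mem (-1) 0 0 0 0 1 0 1 0
    (by ext x y; fin_cases x <;> fin_cases y <;> simp [Matrix.mul_apply, Fin.sum_univ_three, Matrix.one_apply, Matrix.vecHead, Matrix.vecTail]) (by norm_num [Matrix.det_fin_three, Matrix.cons_val_two]))
  have e9 := h !![0,0,1;0,1,0;-1,0,0] (mem 0 0 1 0 1 0 (-1) 0 0
    (by ext x y; fin_cases x <;> fin_cases y <;> simp [Matrix.mul_apply, Fin.sum_univ_three, Matrix.one_apply, Matrix.vecHead, Matrix.vecTail]) (by norm_num [Matrix.det_fin_three, Matrix.cons_val_two]))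
  have e10 := h !![0,0,1;0,-1,0;1,0,0] (mem 0 0 1 0 (-1) 0 1 0 0
    (by ext x y; fin_cases x <;> fin_cases y <;> simp [Matrix.mul_apply, Fin.sum_univ_three, Matrix.one_apply, Matrix.vecHead, Matrix.vecTail]) (by norm_num [Matrix.det_fin_three, Matrix.cons_val_two]))
  simp only [tr3_aux, Matrix.trace_fin_three, Matrix.mul_apply, Fin.sum_univ_three]
    at e1 e2 e3 e4 e5 e6 e7 e8 e9 e10
  norm_num [Matrix.vecHead, Matrix.vecTail, Matrix.cons_val_two] at e1 e2 e3 e4 e5 e6 e7 e8 e9 e10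
  ext i j
  fin_cases i <;> fin_cases j <;> simp <;> linarith

lemma SO3_entry_bound {Q : Mat3} (hQ : Q ∈ SO3) (i j : Fin 3) : |Q i j| ≤ 1 := by
  have h1 : (Qᵀ * Q) j j = 1 := by rw [hQ.1]; simp [Matrix.one_apply]
  rw [Matrix.mul_apply] at h1
  simp only [Matrix.transpose_apply] at h1
  have hle : Q i j * Q i j ≤ 1 := by
    rw [← h1]
    have : ∀ k ∈ Finset.univ, (0:ℝ) ≤ Q k j * Q k j := fun k _ => mul_self_nonneg _
    exact Finset.single_le_sum this (Finset.mem_univ i)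
  rw [← sq_le_one_iff_abs_le_one, sq]
  exact hle

lemma trace_bound (F Q : Mat3) (hQ : Q ∈ SO3) :
    |(Fᵀ * Q).trace| ≤ ∑ i : Fin 3, ∑ j : Fin 3, |F i j| := by
  have : (Fᵀ * Q).trace = ∑ j : Fin 3, ∑ i : Fin 3, F i j * Q i j := by
    simp [Matrix.trace, Matrix.diag, Matrix.mul_apply]
  rw [this]
  calc |∑ j : Fin 3, ∑ i : Fin 3, F i j * Q i j|
      ≤ ∑ j : Fin 3, ∑ i : Fin 3, |F i j * Q i j| := by
        refine (Finset.abs_sum_le_sum_abs _ _).trans ?_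
        exact Finset.sum_le_sum fun j _ => Finset.abs_sum_le_sum_abs _ _
    _ ≤ ∑ j : Fin 3, ∑ i : Fin 3, |F i j| := by
        refine Finset.sum_le_sum fun j _ => Finset.sum_le_sum fun i _ => ?_
        rw [abs_mul]
        calc |F i j| * |Q i j| ≤ |F i j| * 1 :=
              mul_le_mul_of_nonneg_left (SO3_entry_bound hQ i j) (abs_nonneg _)
          _ = |F i j| := mul_one _
    _ = ∑ i : Fin 3, ∑ j : Fin 3, |F i j| := Finset.sum_comm

lemma meas_trace (F : Mat3) : Measurable fun Q : Mat3 => Real.exp ((Fᵀ * Q).trace) := by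
  apply Measurable.exp
  have heq : (fun Q : Mat3 => (Fᵀ * Q).trace)
      = fun Q : Mat3 => ∑ i : Fin 3, ∑ j : Fin 3, Fᵀ i j * Q j i := by
    funext Q; simp [Matrix.trace, Matrix.diag, Matrix.mul_apply]
  rw [heq]
  refine Finset.measurable_sum _ fun i _ => Finset.measurable_sum _ fun j _ => ?_
  have h1 : Measurable fun Q : Mat3 => Q j i :=
    (measurable_pi_apply i).comp (measurable_pi_apply j)
  exact h1.const_mul _

/-- The normalizing constant of a matrix Fisher distribution is positive. -/
lemma cF_pos (ν : Measure Mat3) (hν : IsHaarSO3 ν) (F : Mat3) : 0 < cF ν F := by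
  haveI := hν.1
  set M := ∑ i : Fin 3, ∑ j : Fin 3, |F i j| with hM
  have haeSO3 : ∀ᵐ Q ∂ν, Q ∈ SO3 := by
    rw [MeasureTheory.ae_iff]
    exact hν.2.1
  have hmeas := meas_trace F
  have hint : Integrable (fun Q : Mat3 => Real.exp ((Fᵀ * Q).trace)) ν := by
    refine Integrable.mono' (integrable_const (Real.exp M)) hmeas.aestronglyMeasurable ?_
    filter_upwards [haeSO3] with Q hQ
    rw [Real.norm_eq_abs, abs_of_pos (Real.exp_pos _)]
    exact Real.exp_le_exp.mpr ((abs_le.mp (trace_bound F Q hQ)).2)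
  have hlow : ∀ᵐ Q ∂ν, Real.exp (-M) ≤ Real.exp ((Fᵀ * Q).trace) := by
    filter_upwards [haeSO3] with Q hQ
    exact Real.exp_le_exp.mpr ((abs_le.mp (trace_bound F Q hQ)).1)
  have hmono : Real.exp (-M) ≤ cF ν F := by
    have := MeasureTheory.integral_mono_ae (integrable_const (Real.exp (-M))) hint hlow
    simpa [cF] using this
  exact lt_of_lt_of_le (Real.exp_pos _) hmono

/-- Two MFG densities on `SO(3)×ℝⁿ` coincide everywhere iff
`USVᵀ = ŨS̃Ṽᵀ`, `μ_c(R) = μ̃_c(R)` for all `R ∈ SO(3)`, and `Σ_c = Σ̃_c`. -/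
theorem stmt1 (n : ℕ) (ν : Measure Mat3) (hν : IsHaarSO3 ν)
    (μ μ' : Fin n → ℝ) (Sig Sig' : Matrix (Fin n) (Fin n) ℝ)
    (P P' : Matrix (Fin n) (Fin 3) ℝ) (U V U' V' : Mat3)
    (s s' : Fin 3 → ℝ) (S S' : Mat3)
    (hS : S = Matrix.diagonal s) (hS' : S' = Matrix.diagonal s')
    (hU : U ∈ SO3) (hV : V ∈ SO3) (hU' : U' ∈ SO3) (hV' : V' ∈ SO3)
    (hSig : Sig.IsSymm) (hSig' : Sig'.IsSymm)
    (hc : (sigmaC Sig P S).PosDef) (hc' : (sigmaC Sig' P' S').PosDef) :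
    (∀ R ∈ SO3, ∀ x : Fin n → ℝ,
        mfg ν μ Sig P U S V R x = mfg ν μ' Sig' P' U' S' V' R x) ↔
      (U * S * Vᵀ = U' * S' * V'ᵀ ∧
        (∀ R ∈ SO3, μ + P.mulVec (nuR U S V R) = μ' + P'.mulVec (nuR U' S' V' R)) ∧
        sigmaC Sig P S = sigmaC Sig' P' S') := by
  have hunit : IsUnit (sigmaC Sig P S).det := hc.det_pos.ne'.isUnit
  have hunit' : IsUnit (sigmaC Sig' P' S').det := hc'.det_pos.ne'.isUnit
  have hAsym : ((sigmaC Sig P S)⁻¹)ᵀ = (sigmaC Sig P S)⁻¹ := by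
    have h1 := hc.inv.1.eq
    rwa [Matrix.conjTranspose_eq_transpose_of_trivial] at h1
  have hAsym' : ((sigmaC Sig' P' S')⁻¹)ᵀ = (sigmaC Sig' P' S')⁻¹ := by
    have h1 := hc'.inv.1.eq
    rwa [Matrix.conjTranspose_eq_transpose_of_trivial] at h1
  have hcFpos : 0 < cF ν (U * S * Vᵀ) := cF_pos ν hν _
  have hcFpos' : 0 < cF ν (U' * S' * V'ᵀ) := cF_pos ν hν _
  have hdpos : 0 < Real.sqrt ((2 * Real.pi) ^ n * (sigmaC Sig P S).det) :=
    Real.sqrt_pos.mpr (mul_pos (pow_pos (by positivity) n) hc.det_pos)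
  have hdpos' : 0 < Real.sqrt ((2 * Real.pi) ^ n * (sigmaC Sig' P' S').det) :=
    Real.sqrt_pos.mpr (mul_pos (pow_pos (by positivity) n) hc'.det_pos)
  have hone : (1 : Mat3) ∈ SO3 := ⟨by simp, by simp⟩
  constructor
  · intro h
    -- the key per-`R` identification
    have key : ∀ R ∈ SO3,
        (sigmaC Sig P S)⁻¹ = (sigmaC Sig' P' S')⁻¹ ∧
        (sigmaC Sig P S)⁻¹ *ᵥ (μ + P.mulVec (nuR U S V R))
          = (sigmaC Sig' P' S')⁻¹ *ᵥ (μ' + P'.mulVec (nuR U' S' V' R)) := by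
      intro R hR
      set c := cF ν (U * S * Vᵀ) with hcdef
      set c' := cF ν (U' * S' * V'ᵀ) with hcdef'
      set d := Real.sqrt ((2 * Real.pi) ^ n * (sigmaC Sig P S).det) with hddef
      set d' := Real.sqrt ((2 * Real.pi) ^ n * (sigmaC Sig' P' S').det) with hddef'
      set t := (U * S * Vᵀ * Rᵀ).trace with htdef
      set t' := (U' * S' * V'ᵀ * Rᵀ).trace with htdef'
      set m := μ + P.mulVec (nuR U S V R) with hmdef
      set m' := μ' + P'.mulVec (nuR U' S' V' R) with hmdef'
      have hKpos : (0:ℝ) < (c * d)⁻¹ := inv_pos.mpr (mul_pos hcFpos hdpos)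
      have hKpos' : (0:ℝ) < (c' * d')⁻¹ := inv_pos.mpr (mul_pos hcFpos' hdpos')
      have hexp : ∀ (k a b : ℝ), 0 < k →
          k * Real.exp a * Real.exp b = Real.exp (Real.log k + a + b) := by
        intro k a b hk
        rw [Real.exp_add, Real.exp_add, Real.exp_log hk]
      have hlog : ∀ x : Fin n → ℝ,
          Real.log ((c * d)⁻¹) +
            (-(1/2) * ((x - m) ⬝ᵥ ((sigmaC Sig P S)⁻¹ *ᵥ (x - m)))) + t =
          Real.log ((c' * d')⁻¹) +
            (-(1/2) * ((x - m') ⬝ᵥ ((sigmaC Sig' P' S')⁻¹ *ᵥ (x - m')))) + t' := by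
        intro x
        have h' := h R hR x
        simp only [mfg] at h'
        rw [← hcdef, ← hddef, ← hcdef', ← hddef', ← htdef, ← htdef',
          ← hmdef, ← hmdef'] at h'
        rw [hexp _ _ _ hKpos, hexp _ _ _ hKpos'] at h'
        exact Real.exp_eq_exp.mp h'
      have hquad : ∀ x : Fin n → ℝ,
          (x - m) ⬝ᵥ ((sigmaC Sig P S)⁻¹ *ᵥ (x - m))
            = (x - m') ⬝ᵥ ((sigmaC Sig' P' S')⁻¹ *ᵥ (x - m'))
              + 2 * (Real.log ((c * d)⁻¹) + t - Real.log ((c' * d')⁻¹) - t') := by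
        intro x
        have := hlog x
        linarith
      exact quad_eq _ _ hAsym hAsym' m m' _ hquad
    have hCeq : sigmaC Sig P S = sigmaC Sig' P' S' := by
      have h1 := (key 1 hone).1
      calc sigmaC Sig P S = ((sigmaC Sig P S)⁻¹)⁻¹ :=
            (Matrix.nonsing_inv_nonsing_inv _ hunit).symm
        _ = ((sigmaC Sig' P' S')⁻¹)⁻¹ := by rw [h1]
        _ = sigmaC Sig' P' S' := Matrix.nonsing_inv_nonsing_inv _ hunit'
    have hmu : ∀ R ∈ SO3,
        μ + P.mulVec (nuR U S V R) = μ' + P'.mulVec (nuR U' S' V' R) := by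
      intro R hR
      have h2 := (key R hR).2
      rw [← hCeq] at h2
      have hmv : ∀ v : Fin n → ℝ, sigmaC Sig P S *ᵥ ((sigmaC Sig P S)⁻¹ *ᵥ v) = v := by
        intro v
        rw [Matrix.mulVec_mulVec, Matrix.mul_nonsing_inv _ hunit, Matrix.one_mulVec]
      have h3 := congrArg (fun v => sigmaC Sig P S *ᵥ v) h2
      simpa [hmv] using h3
    refine ⟨?_, hmu, hCeq⟩
    have htr : ∀ R ∈ SO3, ((U * S * Vᵀ - U' * S' * V'ᵀ) * Rᵀ).trace
        = Real.log (cF ν (U * S * Vᵀ)) - Real.log (cF ν (U' * S' * V'ᵀ)) := by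
      intro R hR
      have h' := h R hR (μ + P.mulVec (nuR U S V R))
      simp only [mfg] at h'
      rw [← hmu R hR, ← hCeq] at h'
      simp only [sub_self, Matrix.mulVec_zero, dotProduct_zero, mul_zero,
        Real.exp_zero, mul_one] at h'
      have hln : ∀ (c t : ℝ), 0 < c →
          Real.log ((c * Real.sqrt ((2 * Real.pi) ^ n * (sigmaC Sig P S).det))⁻¹
            * Real.exp t)
          = -(Real.log c + Real.log (Real.sqrt ((2 * Real.pi) ^ n * (sigmaC Sig P S).det))) + t := by
        intro c t hcpos
        rw [Real.log_mul (by positivity) (Real.exp_ne_zero _), Real.log_inv,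
          Real.log_mul hcpos.ne' hdpos.ne', Real.log_exp]
      have h3 := congrArg Real.log h'
      rw [hln _ _ hcFpos, hln _ _ hcFpos'] at h3
      rw [Matrix.sub_mul, Matrix.trace_sub]
      linarith
    have hF0 := trace_lin _ _ htr
    exact sub_eq_zero.mp hF0
  · rintro ⟨hF, hmu, hCC⟩ R hR x
    simp only [mfg]
    rw [hF, hCC, hmu R hR]


end
end

section
/- Let V, M ∈ SO(3), let S ∈ ℝ^{3×3} be symmetric, and set K = VSVᵀ. For i ∈ {1,2,3} let e_i be the i-th standard basis vector of ℝ³. Then for all i, j ∈ {1,2,3}: tr(M·(Ve_i)∧·K·((Ve_j)∧)ᵀ·Mᵀ) = (tr(S)·I − S)_{ij}. (This identifies the inverse covariance of the ambient Gaussian restricted to the tangent space of SO(3) at M with tr(S)I − S.) -/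
open Matrix MeasureTheory Real

noncomputable section

lemma hat_trace_key (a b : Fin 3 → ℝ) (B : Mat3) :
    (hat a * B * (hat b)ᵀ).trace = (a ⬝ᵥ b) * B.trace - b ⬝ᵥ (B *ᵥ a) := by
  simp only [Matrix.trace, Matrix.diag, Matrix.mul_apply, Matrix.transpose_apply,
    dotProduct, Matrix.mulVec, Fin.sum_univ_three, hat,
    Matrix.cons_val_zero, Matrix.cons_val_one, Matrix.head_cons,
    Matrix.cons_val_two, Matrix.tail_cons, Matrix.of_apply, Matrix.cons_val']
  ring

/-- `tr(M·(Ve_i)∧·K·((Ve_j)∧)ᵀ·Mᵀ) = (tr(S)·I − S)_{ij}`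
for `V, M ∈ SO(3)`, `S` symmetric, `K = VSVᵀ`. -/
theorem stmt3 (V M S : Mat3) (hV : V ∈ SO3) (hM : M ∈ SO3) (hS : S.IsSymm)
    (K : Mat3) (hK : K = V * S * Vᵀ) :
    ∀ i j : Fin 3,
      (M * hat (V *ᵥ Pi.single i 1) * K * (hat (V *ᵥ Pi.single j 1))ᵀ * Mᵀ).trace
        = (S.trace • (1 : Mat3) - S) i j := by
  obtain ⟨hV1, -⟩ := hV
  obtain ⟨hM1, -⟩ := hM
  intro i j
  set a := V *ᵥ Pi.single i 1 with ha
  set b := V *ᵥ Pi.single j 1 with hb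
  have hva : a = Pi.single i 1 ᵥ* Vᵀ := by rw [Matrix.vecMul_transpose]
  have hvb : b = Pi.single j 1 ᵥ* Vᵀ := by rw [Matrix.vecMul_transpose]
  have h1 : (M * hat a * K * (hat b)ᵀ * Mᵀ).trace
      = (hat a * K * (hat b)ᵀ).trace := by
    rw [show M * hat a * K * (hat b)ᵀ * Mᵀ = M * (hat a * K * (hat b)ᵀ) * Mᵀ by
      noncomm_ring, Matrix.trace_mul_cycle, ← Matrix.mul_assoc, hM1, Matrix.one_mul]
  rw [h1, hat_trace_key]
  have hsingle : (Pi.single i 1 : Fin 3 → ℝ) ⬝ᵥ Pi.single j 1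
      = if i = j then 1 else 0 := by
    simp [dotProduct_single, Pi.single_apply, eq_comm]
  have hab : a ⬝ᵥ b = (1 : Mat3) i j := by
    show a ⬝ᵥ (V *ᵥ Pi.single j 1) = _
    rw [Matrix.dotProduct_mulVec, hva, Matrix.vecMul_vecMul, hV1,
      Matrix.vecMul_one, hsingle]
    simp [Matrix.one_apply]
  have htr : K.trace = S.trace := by
    rw [hK, Matrix.trace_mul_cycle, hV1, Matrix.one_mul]
  have hKa : K *ᵥ a = (V * S) *ᵥ Pi.single i 1 := by
    rw [ha, hK, Matrix.mulVec_mulVec]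
    rw [Matrix.mul_assoc (V * S), hV1, Matrix.mul_one]
  have hbKa : b ⬝ᵥ (K *ᵥ a) = S i j := by
    rw [hKa, Matrix.dotProduct_mulVec, hvb, Matrix.vecMul_vecMul,
      ← Matrix.mul_assoc, hV1, Matrix.one_mul]
    have hsym : S j i = S i j := by
      conv_lhs => rw [← hS]
      rfl
    simp [Matrix.vecMul, single_dotProduct, dotProduct_single, hsym]
  rw [hab, htr, hbKa]
  simp [Matrix.sub_apply, Matrix.smul_apply, Matrix.one_apply, smul_eq_mul]

end
end

section
/- Let S = diag(s₁,s₂,s₃) with s₁ ≥ s₂ ≥ −s₃ > 0, and let 𝒟₃ = diag(−1,−1,1). Then for every (R,x) ∈ SO(3)×ℝⁿ, the matrix Fisher–Gaussian density with parameters (μ, Σ, P, U, S, V) equals the matrix Fisher–Gaussian density with parameters (μ, Σ̃, P, U, S𝒟₃, V𝒟₃), where Σ̃ = Σ − P(tr(S)I − S)Pᵀ + P(tr(S𝒟₃)I − S𝒟₃)Pᵀ. (V𝒟₃ ∈ SO(3) since det 𝒟₃ = 1.) -/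
open Matrix MeasureTheory Real

noncomputable section

/-- With `S = diag(s₁,s₂,s₃)`, `s₁ ≥ s₂ ≥ −s₃ > 0`, and
`𝒟₃ = diag(−1,−1,1)`, the MFG density with parameters `(μ, Σ, P, U, S, V)` equals
the MFG density with parameters `(μ, Σ̃, P, U, S𝒟₃, V𝒟₃)`, where
`Σ̃ = Σ − P(tr(S)I − S)Pᵀ + P(tr(S𝒟₃)I − S𝒟₃)Pᵀ`. -/
theorem stmt5 (n : ℕ) (ν : Measure Mat3) (hν : IsHaarSO3 ν)
    (μ : Fin n → ℝ) (Sig : Matrix (Fin n) (Fin n) ℝ) (P : Matrix (Fin n) (Fin 3) ℝ)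
    (U V : Mat3) (hU : U ∈ SO3) (hV : V ∈ SO3) (hSig : Sig.IsSymm)
    (s₁ s₂ s₃ : ℝ) (h12 : s₁ ≥ s₂) (h23 : s₂ ≥ -s₃) (h3 : -s₃ > 0)
    (S : Mat3) (hS : S = Matrix.diagonal ![s₁, s₂, s₃])
    (D₃ : Mat3) (hD₃ : D₃ = Matrix.diagonal ![-1, -1, 1])
    (hc : (sigmaC Sig P S).PosDef)
    (Sig' : Matrix (Fin n) (Fin n) ℝ)
    (hSig'def : Sig' = Sig - P * (S.trace • (1 : Mat3) - S) * Pᵀ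
        + P * ((S * D₃).trace • (1 : Mat3) - S * D₃) * Pᵀ) :
    ∀ R ∈ SO3, ∀ x : Fin n → ℝ,
      mfg ν μ Sig P U S V R x = mfg ν μ Sig' P U (S * D₃) (V * D₃) R x := by
  intro R hR x
  have hD₃T : D₃ᵀ = D₃ := by subst hD₃; simp
  have hDD : D₃ * D₃ = 1 := by
    subst hD₃
    ext i j
    fin_cases i <;> fin_cases j <;>
      simp [Matrix.mul_apply, Fin.sum_univ_three, Matrix.diagonal, Matrix.one_apply]
  have hSD : S * D₃ = D₃ * S := by
    subst hS hD₃
    rw [Matrix.diagonal_mul_diagonal, Matrix.diagonal_mul_diagonal]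
    exact congrArg Matrix.diagonal (funext fun i => mul_comm _ _)
  have key : D₃ * (S * D₃) = S := by
    rw [hSD, ← Matrix.mul_assoc, hDD, Matrix.one_mul]
  have key2 : ∀ X : Mat3, D₃ * (D₃ * X) = X := by
    intro X; rw [← Matrix.mul_assoc, hDD, Matrix.one_mul]
  have hF : U * (S * D₃) * (V * D₃)ᵀ = U * S * Vᵀ := by
    rw [Matrix.transpose_mul, hD₃T]
    calc U * (S * D₃) * (D₃ * Vᵀ) = U * (S * (D₃ * (D₃ * Vᵀ))) := by
          simp only [Matrix.mul_assoc]
      _ = U * S * Vᵀ := by rw [key2, Matrix.mul_assoc]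
  have hnu : nuR U (S * D₃) (V * D₃) R = nuR U S V R := by
    unfold nuR
    have h1 : Uᵀ * R * (V * D₃) * (S * D₃) = Uᵀ * R * V * S := by
      simp only [Matrix.mul_assoc, key]
    have h2 : (S * D₃) * (Uᵀ * R * (V * D₃))ᵀ = S * (Uᵀ * R * V)ᵀ := by
      simp only [Matrix.transpose_mul, hD₃T, Matrix.transpose_transpose,
        Matrix.mul_assoc, key2]
    rw [h1, h2]
  have hSc : sigmaC Sig' P (S * D₃) = sigmaC Sig P S := by
    unfold sigmaC
    rw [hSig'def]
    abel
  unfold mfg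
  rw [hF, hnu, hSc]

end
end

section
/- If S ∈ ℝ^{3×3} is diagonal, then the matrix ∫_{SO(3)} Q·etr(SQᵀ) dQ is diagonal; i.e., for all i ≠ j, ∫_{SO(3)} Q_{ij}·etr(SQᵀ) dQ = 0. Consequently, ∫_{SO(3)} (QS − SQᵀ)∨ · etr(SQᵀ) dQ = 0. -/
open Matrix MeasureTheory Real

noncomputable section

-- Auxiliary lemmas

lemma meas_entry (a b : Fin 3) : Measurable (fun Q : Mat3 => Q a b) :=
  (measurable_pi_apply b).comp (measurable_pi_apply a)

lemma meas_mul_left (A : Mat3) : Measurable (fun R : Mat3 => A * R) := by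
  apply measurable_pi_lambda
  intro p
  apply measurable_pi_lambda
  intro q
  have h : (fun R : Mat3 => (A * R) p q) = fun R => ∑ k : Fin 3, A p k * R k q := by
    funext R; simp [Matrix.mul_apply]
  show Measurable fun R : Mat3 => (A * R) p q
  rw [h]
  exact Finset.measurable_sum _ fun k _ => (meas_entry k q).const_mul _

lemma meas_mul_right (A : Mat3) : Measurable (fun R : Mat3 => R * A) := by
  apply measurable_pi_lambda
  intro p
  apply measurable_pi_lambda
  intro q
  have h : (fun R : Mat3 => (R * A) p q) = fun R => ∑ k : Fin 3, R p k * A k q := by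
    funext R; simp [Matrix.mul_apply]
  show Measurable fun R : Mat3 => (R * A) p q
  rw [h]
  exact Finset.measurable_sum _ fun k _ => (meas_entry p k).mul_const _

lemma trace_eq_sum (S : Mat3) (Q : Mat3) :
    (S * Qᵀ).trace = ∑ k : Fin 3, ∑ l : Fin 3, S k l * Q k l := by
  simp [Matrix.trace, Matrix.mul_apply, Matrix.diag]

lemma meas_f (S : Mat3) (a b : Fin 3) :
    Measurable (fun Q : Mat3 => Q a b * Real.exp ((S * Qᵀ).trace)) := by
  refine (meas_entry a b).mul (Real.measurable_exp.comp ?_)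
  have h : (fun Q : Mat3 => (S * Qᵀ).trace)
      = fun Q => ∑ k : Fin 3, ∑ l : Fin 3, S k l * Q k l := by
    funext Q; exact trace_eq_sum S Q
  rw [h]
  exact Finset.measurable_sum _ fun k _ =>
    Finset.measurable_sum _ fun l _ => (meas_entry k l).const_mul _

lemma integ_f (ν : Measure Mat3) (hν : IsHaarSO3 ν) (S : Mat3) (a b : Fin 3) :
    Integrable (fun Q : Mat3 => Q a b * Real.exp ((S * Qᵀ).trace)) ν := by
  have hprob : IsProbabilityMeasure ν := hν.1
  set C : ℝ := ∑ k : Fin 3, ∑ l : Fin 3, |S k l| with hC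
  refine Integrable.mono' (integrable_const (Real.exp C))
    (meas_f S a b).aestronglyMeasurable ?_
  have hae : ∀ᵐ Q ∂ν, Q ∈ SO3 := by
    rw [MeasureTheory.ae_iff]
    exact hν.2.1
  filter_upwards [hae] with Q hQ
  obtain ⟨horth, -⟩ := hQ
  have hbd : ∀ p q : Fin 3, |Q p q| ≤ 1 := by
    intro p q
    have h1 : ∑ k : Fin 3, Q k q * Q k q = 1 := by
      have h := Matrix.ext_iff.2 horth q q
      simpa [Matrix.mul_apply, Matrix.transpose_apply, Matrix.one_apply] using h
    have h2 : Q p q * Q p q ≤ 1 := by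
      rw [← h1]
      exact Finset.single_le_sum (fun k _ => mul_self_nonneg (Q k q)) (Finset.mem_univ p)
    nlinarith [abs_nonneg (Q p q), abs_mul_abs_self (Q p q)]
  have htr : (S * Qᵀ).trace ≤ C := by
    rw [trace_eq_sum, hC]
    refine Finset.sum_le_sum fun k _ => Finset.sum_le_sum fun l _ => ?_
    calc S k l * Q k l ≤ |S k l * Q k l| := le_abs_self _
      _ = |S k l| * |Q k l| := abs_mul _ _
      _ ≤ |S k l| * 1 := mul_le_mul_of_nonneg_left (hbd k l) (abs_nonneg _)
      _ = |S k l| := mul_one _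
  have hnorm : ‖Q a b * Real.exp ((S * Qᵀ).trace)‖
      = |Q a b| * Real.exp ((S * Qᵀ).trace) := by
    rw [Real.norm_eq_abs, abs_mul, abs_of_pos (Real.exp_pos _)]
  rw [hnorm]
  calc |Q a b| * Real.exp ((S * Qᵀ).trace)
      ≤ 1 * Real.exp ((S * Qᵀ).trace) :=
        mul_le_mul_of_nonneg_right (hbd a b) (Real.exp_pos _).le
    _ = Real.exp ((S * Qᵀ).trace) := one_mul _
    _ ≤ Real.exp C := Real.exp_le_exp.2 htr

def Dm (i : Fin 3) : Mat3 := Matrix.diagonal (fun k => if k = i then (1:ℝ) else -1)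

lemma Dm_mem (i : Fin 3) : Dm i ∈ SO3 := by
  constructor
  · rw [Dm, Matrix.diagonal_transpose, Matrix.diagonal_mul_diagonal]
    have h : (fun k : Fin 3 => (if k = i then (1:ℝ) else -1) * (if k = i then (1:ℝ) else -1))
        = fun _ => 1 := by
      funext k; by_cases hk : k = i <;> simp [hk]
    rw [h, Matrix.diagonal_one]
  · rw [Dm, Matrix.det_diagonal]
    fin_cases i <;> rw [Fin.prod_univ_three] <;>
      norm_num [Fin.ext_iff]

lemma Dm_conj_diag (i : Fin 3) (s : Fin 3 → ℝ) :
    Dm i * Matrix.diagonal s * Dm i = Matrix.diagonal s := by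
  rw [Dm, Matrix.diagonal_mul_diagonal, Matrix.diagonal_mul_diagonal]
  have h : (fun k : Fin 3 =>
      (if k = i then (1:ℝ) else -1) * s k * (if k = i then (1:ℝ) else -1)) = s := by
    funext k; by_cases hk : k = i <;> simp [hk] <;> ring
  rw [h]

lemma Dm_entry (i j : Fin 3) (hij : j ≠ i) (Q : Mat3) :
    (Dm i * Q * Dm i) i j = - Q i j := by
  simp [Dm, Matrix.mul_diagonal, Matrix.diagonal_mul, hij]

lemma Dm_trace (i : Fin 3) (s : Fin 3 → ℝ) (Q : Mat3) :
    (Matrix.diagonal s * (Dm i * Q * Dm i)ᵀ).trace = (Matrix.diagonal s * Qᵀ).trace := by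
  have hsym : (Dm i)ᵀ = Dm i := Matrix.diagonal_transpose _
  rw [Matrix.transpose_mul, Matrix.transpose_mul, hsym]
  have h1 : Matrix.diagonal s * (Dm i * (Qᵀ * Dm i))
      = (Matrix.diagonal s * Dm i * Qᵀ) * Dm i := by noncomm_ring
  rw [h1, Matrix.trace_mul_comm]
  have h2 : Dm i * (Matrix.diagonal s * Dm i * Qᵀ)
      = (Dm i * Matrix.diagonal s * Dm i) * Qᵀ := by noncomm_ring
  rw [h2, Dm_conj_diag]


/-- For diagonal `S`, the matrix `∫_{SO(3)} Q·etr(SQᵀ) dQ` is diagonal,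
and consequently `∫_{SO(3)} (QS − SQᵀ)∨ · etr(SQᵀ) dQ = 0`. -/
theorem stmt6 (ν : Measure Mat3) (hν : IsHaarSO3 ν)
    (s : Fin 3 → ℝ) (S : Mat3) (hS : S = Matrix.diagonal s) :
    (∀ i j : Fin 3, i ≠ j → ∫ Q, Q i j * Real.exp ((S * Qᵀ).trace) ∂ν = 0) ∧
    (∀ i : Fin 3, ∫ Q, vee (Q * S - S * Qᵀ) i * Real.exp ((S * Qᵀ).trace) ∂ν = 0) := by
  subst hS
  have part1 : ∀ i j : Fin 3, i ≠ j →
      ∫ Q, Q i j * Real.exp ((Matrix.diagonal s * Qᵀ).trace) ∂ν = 0 := by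
    intro i j hij
    have hD := Dm_mem i
    have hg : Measurable fun R : Mat3 => Dm i * R * Dm i :=
      (meas_mul_right (Dm i)).comp (meas_mul_left (Dm i))
    have hmap : Measure.map (fun R : Mat3 => Dm i * R * Dm i) ν = ν := by
      have h1 := hν.2.2.1 (Dm i) hD
      have h2 := hν.2.2.2 (Dm i) hD
      have hc : (fun R : Mat3 => Dm i * R * Dm i)
          = (fun R : Mat3 => R * Dm i) ∘ (fun R : Mat3 => Dm i * R) := rfl
      rw [hc, ← Measure.map_map (meas_mul_right (Dm i)) (meas_mul_left (Dm i)), h1, h2]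
    have hf' : AEStronglyMeasurable
        (fun Q : Mat3 => Q i j * Real.exp ((Matrix.diagonal s * Qᵀ).trace))
        (Measure.map (fun R : Mat3 => Dm i * R * Dm i) ν) := by
      rw [hmap]
      exact (meas_f (Matrix.diagonal s) i j).aestronglyMeasurable
    have key : (∫ Q, Q i j * Real.exp ((Matrix.diagonal s * Qᵀ).trace) ∂ν)
        = ∫ Q, (Dm i * Q * Dm i) i j *
            Real.exp ((Matrix.diagonal s * (Dm i * Q * Dm i)ᵀ).trace) ∂ν := by
      conv_lhs => rw [← hmap]
      exact MeasureTheory.integral_map hg.aemeasurable hf'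
    have key2 : (∫ Q, (Dm i * Q * Dm i) i j *
            Real.exp ((Matrix.diagonal s * (Dm i * Q * Dm i)ᵀ).trace) ∂ν)
        = - ∫ Q, Q i j * Real.exp ((Matrix.diagonal s * Qᵀ).trace) ∂ν := by
      rw [← MeasureTheory.integral_neg]
      refine integral_congr_ae (Filter.Eventually.of_forall fun Q => ?_)
      show (Dm i * Q * Dm i) i j *
            Real.exp ((Matrix.diagonal s * (Dm i * Q * Dm i)ᵀ).trace)
          = -(Q i j * Real.exp ((Matrix.diagonal s * Qᵀ).trace))
      rw [Dm_trace, Dm_entry i j (Ne.symm hij)]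
      ring
    have := key.trans key2
    linarith
  refine ⟨part1, ?_⟩
  have hint : ∀ a b : Fin 3, Integrable
      (fun Q : Mat3 => Q a b * Real.exp ((Matrix.diagonal s * Qᵀ).trace)) ν :=
    fun a b => integ_f ν hν _ a b
  have gen : ∀ a b : Fin 3, a ≠ b →
      ∫ Q, (Q a b * s b - s a * Q b a) * Real.exp ((Matrix.diagonal s * Qᵀ).trace) ∂ν = 0 := by
    intro a b hab
    have he : (fun Q : Mat3 =>
        (Q a b * s b - s a * Q b a) * Real.exp ((Matrix.diagonal s * Qᵀ).trace))
        = fun Q : Mat3 =>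
            s b * (Q a b * Real.exp ((Matrix.diagonal s * Qᵀ).trace))
          - s a * (Q b a * Real.exp ((Matrix.diagonal s * Qᵀ).trace)) := by
      funext Q; ring
    rw [he, MeasureTheory.integral_sub ((hint a b).const_mul _) ((hint b a).const_mul _),
      MeasureTheory.integral_const_mul, MeasureTheory.integral_const_mul,
      part1 a b hab, part1 b a (Ne.symm hab)]
    ring
  have entry : ∀ (a b : Fin 3) (Q : Mat3),
      (Q * Matrix.diagonal s - Matrix.diagonal s * Qᵀ) a b
        = Q a b * s b - s a * Q b a := by
    intro a b Q
    simp [Matrix.sub_apply, Matrix.mul_diagonal, Matrix.diagonal_mul,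
      Matrix.transpose_apply]
  intro i
  fin_cases i
  · have h := gen 2 1 (by decide)
    calc (∫ Q, vee (Q * Matrix.diagonal s - Matrix.diagonal s * Qᵀ) 0
            * Real.exp ((Matrix.diagonal s * Qᵀ).trace) ∂ν)
        = ∫ Q, (Q 2 1 * s 1 - s 2 * Q 1 2)
            * Real.exp ((Matrix.diagonal s * Qᵀ).trace) ∂ν := by
          refine integral_congr_ae (Filter.Eventually.of_forall fun Q => ?_)
          show vee (Q * Matrix.diagonal s - Matrix.diagonal s * Qᵀ) 0
              * Real.exp ((Matrix.diagonal s * Qᵀ).trace)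
            = (Q 2 1 * s 1 - s 2 * Q 1 2)
              * Real.exp ((Matrix.diagonal s * Qᵀ).trace)
          rw [show vee (Q * Matrix.diagonal s - Matrix.diagonal s * Qᵀ) 0
              = (Q * Matrix.diagonal s - Matrix.diagonal s * Qᵀ) 2 1 from rfl, entry]
      _ = 0 := h
  · have h := gen 0 2 (by decide)
    calc (∫ Q, vee (Q * Matrix.diagonal s - Matrix.diagonal s * Qᵀ) 1
            * Real.exp ((Matrix.diagonal s * Qᵀ).trace) ∂ν)
        = ∫ Q, (Q 0 2 * s 2 - s 0 * Q 2 0)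
            * Real.exp ((Matrix.diagonal s * Qᵀ).trace) ∂ν := by
          refine integral_congr_ae (Filter.Eventually.of_forall fun Q => ?_)
          show vee (Q * Matrix.diagonal s - Matrix.diagonal s * Qᵀ) 1
              * Real.exp ((Matrix.diagonal s * Qᵀ).trace)
            = (Q 0 2 * s 2 - s 0 * Q 2 0)
              * Real.exp ((Matrix.diagonal s * Qᵀ).trace)
          rw [show vee (Q * Matrix.diagonal s - Matrix.diagonal s * Qᵀ) 1
              = (Q * Matrix.diagonal s - Matrix.diagonal s * Qᵀ) 0 2 from rfl, entry]
      _ = 0 := h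
  · have h := gen 1 0 (by decide)
    calc (∫ Q, vee (Q * Matrix.diagonal s - Matrix.diagonal s * Qᵀ) 2
            * Real.exp ((Matrix.diagonal s * Qᵀ).trace) ∂ν)
        = ∫ Q, (Q 1 0 * s 0 - s 1 * Q 0 1)
            * Real.exp ((Matrix.diagonal s * Qᵀ).trace) ∂ν := by
          refine integral_congr_ae (Filter.Eventually.of_forall fun Q => ?_)
          show vee (Q * Matrix.diagonal s - Matrix.diagonal s * Qᵀ) 2
              * Real.exp ((Matrix.diagonal s * Qᵀ).trace)
            = (Q 1 0 * s 0 - s 1 * Q 0 1)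
              * Real.exp ((Matrix.diagonal s * Qᵀ).trace)
          rw [show vee (Q * Matrix.diagonal s - Matrix.diagonal s * Qᵀ) 2
              = (Q * Matrix.diagonal s - Matrix.diagonal s * Qᵀ) 1 0 from rfl, entry]
      _ = 0 := h


end
end

section
/- Let S = diag(s₁,s₂,s₃) and let E[·] denote expectation with respect to the matrix Fisher density etr(SQᵀ)/c(S) on SO(3). Define ν_Q = (QS − SQᵀ)∨. Then the 3×3 matrix E[ν_Q ν_Qᵀ] is diagonal, and for each permutation {i,j,k} = {1,2,3} its i-th diagonal entry equals (s_j² + s_k²)·E[Q_{jk}²] − 2 s_j s_k·E[Q_{jk} Q_{kj}]; in particular E[Q_{jk}²] = E[Q_{kj}²]. -/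
open Matrix MeasureTheory Real

noncomputable section

section Stmt8Aux

open Matrix MeasureTheory Real

lemma measurable_entry (i j : Fin 3) : Measurable fun Q : Mat3 => Q i j :=
  (measurable_pi_apply j).comp (measurable_pi_apply i)

lemma measurable_transpose3 : Measurable fun Q : Mat3 => Qᵀ :=
  measurable_pi_lambda _ fun i => measurable_pi_lambda _ fun j => measurable_entry j i

lemma measurable_mulR (A : Mat3) : Measurable fun Q : Mat3 => Q * A := by
  refine measurable_pi_lambda _ fun i => measurable_pi_lambda _ fun j => ?_
  have : (fun Q : Mat3 => (Q * A) i j) = fun Q : Mat3 => ∑ k, Q i k * A k j := by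
    funext Q; simp [Matrix.mul_apply]
  exact this ▸ Finset.measurable_sum _ fun k _ => (measurable_entry i k).mul measurable_const

lemma measurable_mulL (A : Mat3) : Measurable fun Q : Mat3 => A * Q := by
  refine measurable_pi_lambda _ fun i => measurable_pi_lambda _ fun j => ?_
  have : (fun Q : Mat3 => (A * Q) i j) = fun Q : Mat3 => ∑ k, A i k * Q k j := by
    funext Q; simp [Matrix.mul_apply]
  exact this ▸ Finset.measurable_sum _ fun k _ => measurable_const.mul (measurable_entry k j)

lemma measurable_mulT : Measurable fun p : Mat3 × Mat3 => p.1 * p.2ᵀ := by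
  refine measurable_pi_lambda _ fun i => measurable_pi_lambda _ fun j => ?_
  have : (fun p : Mat3 × Mat3 => (p.1 * p.2ᵀ) i j) = fun p : Mat3 × Mat3 => ∑ k, p.1 i k * p.2 j k := by
    funext p; simp [Matrix.mul_apply]
  exact this ▸ Finset.measurable_sum _ fun k _ =>
    ((measurable_entry i k).comp measurable_fst).mul ((measurable_entry j k).comp measurable_snd)

lemma mem_SO3_transpose {Q : Mat3} (h : Q ∈ SO3) : Qᵀ ∈ SO3 := by
  obtain ⟨h1, h2⟩ := h
  have h3 : Q * Qᵀ = 1 := mul_eq_one_comm.mpr h1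
  exact ⟨by simpa [Matrix.transpose_transpose] using h3,
    by simpa [Matrix.det_transpose] using h2⟩

lemma so3_abs_entry_le {Q : Mat3} (h : Q ∈ SO3) (i j : Fin 3) : |Q i j| ≤ 1 := by
  have h11 : (Qᵀ * Q) j j = 1 := by rw [h.1]; simp [Matrix.one_apply]
  have hsum : ∑ k, Q k j ^ 2 = 1 := by
    simpa [Matrix.mul_apply, Matrix.transpose_apply, pow_two] using h11
  have hle : Q i j ^ 2 ≤ 1 := by
    rw [← hsum]
    exact Finset.single_le_sum (f := fun k => Q k j ^ 2) (fun k _ => sq_nonneg _)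
      (Finset.mem_univ i)
  exact (sq_le_one_iff_abs_le_one (Q i j)).mp hle

lemma trace_diag (s : Fin 3 → ℝ) (M : Mat3) :
    (Matrix.diagonal s * M).trace = ∑ i, s i * M i i := by
  simp [Matrix.trace, Matrix.diag, Matrix.diagonal_mul]

lemma rho_meas (s : Fin 3 → ℝ) :
    Measurable fun Q : Mat3 => Real.exp ((Matrix.diagonal s * Qᵀ).trace) := by
  apply Real.measurable_exp.comp
  have : (fun Q : Mat3 => (Matrix.diagonal s * Qᵀ).trace) = fun Q => ∑ i, s i * Q i i := by
    funext Q; rw [trace_diag]; simp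
  exact this ▸ Finset.measurable_sum _ fun i _ => measurable_const.mul (measurable_entry i i)

lemma trace_le (s : Fin 3 → ℝ) {Q : Mat3} (h : Q ∈ SO3) :
    (Matrix.diagonal s * Qᵀ).trace ≤ ∑ i, |s i| := by
  rw [trace_diag]
  apply Finset.sum_le_sum
  intro i _
  simp only [Matrix.transpose_apply]
  calc s i * Q i i ≤ |s i * Q i i| := le_abs_self _
    _ = |s i| * |Q i i| := abs_mul _ _
    _ ≤ |s i| * 1 := by
        exact mul_le_mul_of_nonneg_left (so3_abs_entry_le h i i) (abs_nonneg _)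
    _ = |s i| := mul_one _

lemma rho_bound (s : Fin 3 → ℝ) {Q : Mat3} (h : Q ∈ SO3) :
    Real.exp ((Matrix.diagonal s * Qᵀ).trace) ≤ Real.exp (∑ i, |s i|) :=
  Real.exp_le_exp.mpr (trace_le s h)

lemma integrable_bd (ν : Measure Mat3) (hν : IsHaarSO3 ν) {f : Mat3 → ℝ}
    (hf : Measurable f) {C : ℝ} (hC : ∀ Q ∈ SO3, |f Q| ≤ C) : Integrable f ν := by
  haveI := hν.1
  refine ⟨hf.aestronglyMeasurable, ?_⟩
  apply HasFiniteIntegral.of_bounded (C := C)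
  have hae : ∀ᵐ Q ∂ν, Q ∈ SO3 := by
    rw [ae_iff]
    simpa [Set.compl_def] using hν.2.1
  filter_upwards [hae] with Q hQ
  simpa [Real.norm_eq_abs] using hC Q hQ

lemma integrable_mono2 (ν : Measure Mat3) (hν : IsHaarSO3 ν) (s : Fin 3 → ℝ)
    (a b c d : Fin 3) :
    Integrable (fun Q : Mat3 => Q a b * Q c d * Real.exp ((Matrix.diagonal s * Qᵀ).trace)) ν := by
  refine integrable_bd ν hν (((measurable_entry a b).mul (measurable_entry c d)).mul (rho_meas s))
    (C := Real.exp (∑ i, |s i|)) ?_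
  intro Q hQ
  rw [abs_mul, abs_mul, abs_of_pos (Real.exp_pos _)]
  calc |Q a b| * |Q c d| * Real.exp ((Matrix.diagonal s * Qᵀ).trace)
      ≤ 1 * 1 * Real.exp (∑ i, |s i|) := by
        gcongr
        · exact so3_abs_entry_le hQ a b
        · exact so3_abs_entry_le hQ c d
        · exact trace_le s hQ
    _ = Real.exp (∑ i, |s i|) := by ring

lemma integral_comp_inv (ν : Measure Mat3) {T : Mat3 → Mat3} (hmap : Measure.map T ν = ν)
    (hT : Measurable T) {f : Mat3 → ℝ} (hf : AEStronglyMeasurable f ν) :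
    ∫ Q, f (T Q) ∂ν = ∫ Q, f Q ∂ν := by
  conv_rhs => rw [← hmap]
  rw [integral_map hT.aemeasurable (by rwa [hmap])]

lemma map_conj (ν : Measure Mat3) (hν : IsHaarSO3 ν) {A B : Mat3} (hA : A ∈ SO3) (hB : B ∈ SO3) :
    Measure.map (fun Q : Mat3 => A * Q * B) ν = ν := by
  have h1 : (fun Q : Mat3 => A * Q * B) = (fun Q : Mat3 => Q * B) ∘ (fun Q : Mat3 => A * Q) := by
    funext Q; simp [Function.comp]
  rw [h1, ← Measure.map_map (measurable_mulR B) (measurable_mulL A),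
    hν.2.2.1 A hA, hν.2.2.2 B hB]

lemma map_transpose (ν : Measure Mat3) (hν : IsHaarSO3 ν) :
    Measure.map (fun Q : Mat3 => Qᵀ) ν = ν := by
  haveI := hν.1
  have hι : Measurable fun Q : Mat3 => Qᵀ := measurable_transpose3
  have hae : ∀ᵐ Q ∂ν, Q ∈ SO3 := by
    rw [ae_iff]
    simpa [Set.compl_def] using hν.2.1
  have hright : ∀ {A : Mat3}, A ∈ SO3 → ∀ g : Mat3 → ENNReal, Measurable g →
      ∫⁻ Q, g (Q * A) ∂ν = ∫⁻ Q, g Q ∂ν := by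
    intro A hA g hg
    conv_rhs => rw [← hν.2.2.2 A hA]
    rw [lintegral_map hg (measurable_mulR A)]
  have key : ∀ f : Mat3 → ENNReal, Measurable f → ∫⁻ Q, f Qᵀ ∂ν = ∫⁻ Q, f Q ∂ν := by
    intro f hf
    calc ∫⁻ Q, f Qᵀ ∂ν
        = ∫⁻ x, ∫⁻ y, f (x * yᵀ) ∂ν ∂ν := by
          have h1 : ∀ᵐ x ∂ν, (∫⁻ y, f (x * yᵀ) ∂ν) = ∫⁻ Q, f Qᵀ ∂ν := by
            filter_upwards [hae] with x hx
            calc ∫⁻ y, f (x * yᵀ) ∂ν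
                = ∫⁻ y, (fun z : Mat3 => f zᵀ) (y * xᵀ) ∂ν := by
                  apply lintegral_congr; intro y
                  show f (x * yᵀ) = f ((y * xᵀ)ᵀ)
                  rw [Matrix.transpose_mul, Matrix.transpose_transpose]
              _ = ∫⁻ y, f yᵀ ∂ν := hright (mem_SO3_transpose hx) _ (hf.comp hι)
          rw [lintegral_congr_ae h1, lintegral_const, measure_univ, mul_one]
      _ = ∫⁻ y, ∫⁻ x, f (x * yᵀ) ∂ν ∂ν :=
          lintegral_lintegral_swap ((hf.comp measurable_mulT).aemeasurable)
      _ = ∫⁻ _, ∫⁻ Q, f Q ∂ν ∂ν := by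
          apply lintegral_congr_ae
          filter_upwards [hae] with y hy
          exact hright (mem_SO3_transpose hy) f hf
      _ = ∫⁻ Q, f Q ∂ν := by rw [lintegral_const, measure_univ, mul_one]
  apply Measure.ext
  intro t ht
  rw [Measure.map_apply hι ht, ← lintegral_indicator_one (hι ht),
    ← lintegral_indicator_one ht, ← key _ (measurable_one.indicator ht)]
  apply lintegral_congr
  intro Q
  by_cases h : Qᵀ ∈ t <;> simp [Set.indicator, h, Set.mem_preimage]

lemma numer_transpose (ν : Measure Mat3) (hν : IsHaarSO3 ν) (s : Fin 3 → ℝ) (a b : Fin 3) :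
    ∫ Q, Q a b ^ 2 * Real.exp ((Matrix.diagonal s * Qᵀ).trace) ∂ν
      = ∫ Q, Q b a ^ 2 * Real.exp ((Matrix.diagonal s * Qᵀ).trace) ∂ν := by
  have hmeas : AEStronglyMeasurable
      (fun Q : Mat3 => Q a b ^ 2 * Real.exp ((Matrix.diagonal s * Qᵀ).trace)) ν :=
    (((measurable_entry a b).pow_const 2).mul (rho_meas s)).aestronglyMeasurable
  have h := integral_comp_inv ν (map_transpose ν hν) measurable_transpose3 hmeas
  rw [← h]
  apply integral_congr_ae
  apply Filter.EventuallyEq.of_eq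
  funext Q
  simp [Matrix.transpose_apply, Matrix.transpose_transpose, trace_diag]

end Stmt8Aux
section Stmt8Aux2

open Matrix MeasureTheory Real

lemma vee_apply (s : Fin 3 → ℝ) (Q : Mat3) :
    vee (Q * Matrix.diagonal s - Matrix.diagonal s * Qᵀ) =
      ![Q 2 1 * s 1 - s 2 * Q 1 2, Q 0 2 * s 2 - s 0 * Q 2 0, Q 1 0 * s 0 - s 1 * Q 0 1] := by
  funext i
  fin_cases i <;>
    simp [vee, Matrix.sub_apply, Matrix.mul_diagonal, Matrix.diagonal_mul,
      Matrix.transpose_apply]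

lemma vee_meas (s : Fin 3 → ℝ) (i : Fin 3) :
    Measurable fun Q : Mat3 => vee (Q * Matrix.diagonal s - Matrix.diagonal s * Qᵀ) i := by
  simp only [vee_apply]
  fin_cases i <;>
    simp only [Matrix.cons_val_zero, Matrix.cons_val_one, Matrix.cons_val_two,
      Matrix.head_cons, Matrix.vecTail, Matrix.tail_cons, Matrix.vecHead, Fin.isValue,
      Fin.zero_eta, Fin.mk_one, Function.comp]
  · exact ((measurable_entry 2 1).mul_const _).sub (measurable_const.mul (measurable_entry 1 2))
  · exact ((measurable_entry 0 2).mul_const _).sub (measurable_const.mul (measurable_entry 2 0))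
  · exact ((measurable_entry 1 0).mul_const _).sub (measurable_const.mul (measurable_entry 0 1))

lemma conj_diag_apply (ε : Fin 3 → ℝ) (Q : Mat3) (i j : Fin 3) :
    (Matrix.diagonal ε * Q * Matrix.diagonal ε) i j = ε i * Q i j * ε j := by
  simp [Matrix.mul_diagonal, Matrix.diagonal_mul]

lemma rho_conj (s ε : Fin 3 → ℝ) (hε : ∀ i, ε i * ε i = 1) (Q : Mat3) :
    Real.exp ((Matrix.diagonal s * (Matrix.diagonal ε * Q * Matrix.diagonal ε)ᵀ).trace)
      = Real.exp ((Matrix.diagonal s * Qᵀ).trace) := by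
  congr 1
  rw [trace_diag, trace_diag]
  apply Finset.sum_congr rfl
  intro i _
  rw [Matrix.transpose_apply, Matrix.transpose_apply, conj_diag_apply]
  have h := hε i
  calc s i * (ε i * Q i i * ε i) = s i * Q i i * (ε i * ε i) := by ring
    _ = s i * Q i i := by rw [h, mul_one]

lemma numer_mixed_swap (ν : Measure Mat3) (s : Fin 3 → ℝ) (p q : Fin 3) :
    ∫ Q, Q p q * Q q p * Real.exp ((Matrix.diagonal s * Qᵀ).trace) ∂ν
      = ∫ Q, Q q p * Q p q * Real.exp ((Matrix.diagonal s * Qᵀ).trace) ∂ν := by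
  have h : (fun Q : Mat3 => Q p q * Q q p * Real.exp ((Matrix.diagonal s * Qᵀ).trace))
      = fun Q => Q q p * Q p q * Real.exp ((Matrix.diagonal s * Qᵀ).trace) := by
    funext Q; ring
  rw [h]

lemma numer_expand (ν : Measure Mat3) (hν : IsHaarSO3 ν) (s : Fin 3 → ℝ) (p q : Fin 3) :
    ∫ Q, (Q p q * s q - s p * Q q p) ^ 2 * Real.exp ((Matrix.diagonal s * Qᵀ).trace) ∂ν
      = (s p ^ 2 + s q ^ 2) * ∫ Q, Q p q ^ 2 * Real.exp ((Matrix.diagonal s * Qᵀ).trace) ∂ν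
        - 2 * s p * s q * ∫ Q, Q p q * Q q p * Real.exp ((Matrix.diagonal s * Qᵀ).trace) ∂ν := by
  have i1 : Integrable (fun Q : Mat3 => Q p q ^ 2 * Real.exp ((Matrix.diagonal s * Qᵀ).trace)) ν := by
    simpa [pow_two] using integrable_mono2 ν hν s p q p q
  have i2 : Integrable (fun Q : Mat3 => Q q p ^ 2 * Real.exp ((Matrix.diagonal s * Qᵀ).trace)) ν := by
    simpa [pow_two] using integrable_mono2 ν hν s q p q p
  have i3 : Integrable (fun Q : Mat3 => Q p q * Q q p * Real.exp ((Matrix.diagonal s * Qᵀ).trace)) ν :=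
    integrable_mono2 ν hν s p q q p
  have j1 : Integrable (fun Q : Mat3 =>
      s q ^ 2 * (Q p q ^ 2 * Real.exp ((Matrix.diagonal s * Qᵀ).trace))) ν := i1.const_mul _
  have j2 : Integrable (fun Q : Mat3 =>
      s p ^ 2 * (Q q p ^ 2 * Real.exp ((Matrix.diagonal s * Qᵀ).trace))) ν := i2.const_mul _
  have j3 : Integrable (fun Q : Mat3 =>
      2 * s p * s q * (Q p q * Q q p * Real.exp ((Matrix.diagonal s * Qᵀ).trace))) ν :=
    i3.const_mul _
  have j12 : Integrable (fun Q : Mat3 =>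
      s q ^ 2 * (Q p q ^ 2 * Real.exp ((Matrix.diagonal s * Qᵀ).trace))
        + s p ^ 2 * (Q q p ^ 2 * Real.exp ((Matrix.diagonal s * Qᵀ).trace))) ν := j1.add j2
  have e1 : (fun Q : Mat3 => (Q p q * s q - s p * Q q p) ^ 2 * Real.exp ((Matrix.diagonal s * Qᵀ).trace))
      = fun Q => (s q ^ 2 * (Q p q ^ 2 * Real.exp ((Matrix.diagonal s * Qᵀ).trace))
        + s p ^ 2 * (Q q p ^ 2 * Real.exp ((Matrix.diagonal s * Qᵀ).trace)))
        - 2 * s p * s q * (Q p q * Q q p * Real.exp ((Matrix.diagonal s * Qᵀ).trace)) := by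
    funext Q; ring
  rw [e1, integral_sub j12 j3, integral_add j1 j2, MeasureTheory.integral_const_mul, MeasureTheory.integral_const_mul,
    MeasureTheory.integral_const_mul, numer_transpose ν hν s q p]
  ring

lemma part1_num (ν : Measure Mat3) (hν : IsHaarSO3 ν) (s : Fin 3 → ℝ) (a b : Fin 3)
    (ε : Fin 3 → ℝ) (hεD : Matrix.diagonal ε ∈ SO3) (hε : ∀ i, ε i * ε i = 1)
    (hsign : ∀ Q : Mat3,
      vee (Matrix.diagonal ε * Q * Matrix.diagonal ε * Matrix.diagonal s -
          Matrix.diagonal s * (Matrix.diagonal ε * Q * Matrix.diagonal ε)ᵀ) a *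
        vee (Matrix.diagonal ε * Q * Matrix.diagonal ε * Matrix.diagonal s -
          Matrix.diagonal s * (Matrix.diagonal ε * Q * Matrix.diagonal ε)ᵀ) b
        = -(vee (Q * Matrix.diagonal s - Matrix.diagonal s * Qᵀ) a *
            vee (Q * Matrix.diagonal s - Matrix.diagonal s * Qᵀ) b)) :
    ∫ Q, vee (Q * Matrix.diagonal s - Matrix.diagonal s * Qᵀ) a *
      vee (Q * Matrix.diagonal s - Matrix.diagonal s * Qᵀ) b *
      Real.exp ((Matrix.diagonal s * Qᵀ).trace) ∂ν = 0 := by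
  have hmap := map_conj ν hν hεD hεD
  have hTmeas : Measurable fun Q : Mat3 =>
      Matrix.diagonal ε * Q * Matrix.diagonal ε :=
    (measurable_mulR _).comp (measurable_mulL _)
  have hfmeas : AEStronglyMeasurable (fun Q : Mat3 =>
      vee (Q * Matrix.diagonal s - Matrix.diagonal s * Qᵀ) a *
      vee (Q * Matrix.diagonal s - Matrix.diagonal s * Qᵀ) b *
      Real.exp ((Matrix.diagonal s * Qᵀ).trace)) ν :=
    (((vee_meas s a).mul (vee_meas s b)).mul (rho_meas s)).aestronglyMeasurable
  have hcomp := integral_comp_inv ν hmap hTmeas hfmeas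
  have hpt : ∀ Q : Mat3,
      (fun Q : Mat3 =>
        vee (Q * Matrix.diagonal s - Matrix.diagonal s * Qᵀ) a *
        vee (Q * Matrix.diagonal s - Matrix.diagonal s * Qᵀ) b *
        Real.exp ((Matrix.diagonal s * Qᵀ).trace))
      (Matrix.diagonal ε * Q * Matrix.diagonal ε) =
      -(vee (Q * Matrix.diagonal s - Matrix.diagonal s * Qᵀ) a *
        vee (Q * Matrix.diagonal s - Matrix.diagonal s * Qᵀ) b *
        Real.exp ((Matrix.diagonal s * Qᵀ).trace)) := by
    intro Q
    show vee (Matrix.diagonal ε * Q * Matrix.diagonal ε * Matrix.diagonal s -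
          Matrix.diagonal s * (Matrix.diagonal ε * Q * Matrix.diagonal ε)ᵀ) a *
        vee (Matrix.diagonal ε * Q * Matrix.diagonal ε * Matrix.diagonal s -
          Matrix.diagonal s * (Matrix.diagonal ε * Q * Matrix.diagonal ε)ᵀ) b *
        Real.exp ((Matrix.diagonal s * (Matrix.diagonal ε * Q * Matrix.diagonal ε)ᵀ).trace) = _
    rw [rho_conj s ε hε Q, hsign Q, neg_mul]
  have hzero := hcomp
  rw [integral_congr_ae (Filter.EventuallyEq.of_eq (funext hpt)), integral_neg] at hzero
  linarith

lemma signs0_SO3 : Matrix.diagonal ![(1:ℝ),-1,-1] ∈ SO3 := by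
  constructor
  · have h : (fun i => ![(1:ℝ),-1,-1] i * ![(1:ℝ),-1,-1] i) = fun _ => (1:ℝ) := by
      funext i; fin_cases i <;> norm_num
    rw [Matrix.diagonal_transpose, Matrix.diagonal_mul_diagonal, h, Matrix.diagonal_one]
  · rw [Matrix.det_diagonal, Fin.prod_univ_three]
    norm_num [Matrix.cons_val_two]

lemma signs1_SO3 : Matrix.diagonal ![(-1:ℝ),1,-1] ∈ SO3 := by
  constructor
  · have h : (fun i => ![(-1:ℝ),1,-1] i * ![(-1:ℝ),1,-1] i) = fun _ => (1:ℝ) := by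
      funext i; fin_cases i <;> norm_num
    rw [Matrix.diagonal_transpose, Matrix.diagonal_mul_diagonal, h, Matrix.diagonal_one]
  · rw [Matrix.det_diagonal, Fin.prod_univ_three]
    norm_num [Matrix.cons_val_two]

lemma signs2_SO3 : Matrix.diagonal ![(-1:ℝ),-1,1] ∈ SO3 := by
  constructor
  · have h : (fun i => ![(-1:ℝ),-1,1] i * ![(-1:ℝ),-1,1] i) = fun _ => (1:ℝ) := by
      funext i; fin_cases i <;> norm_num
    rw [Matrix.diagonal_transpose, Matrix.diagonal_mul_diagonal, h, Matrix.diagonal_one]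
  · rw [Matrix.det_diagonal, Fin.prod_univ_three]
    norm_num [Matrix.cons_val_two]

lemma signs0_sq : ∀ i : Fin 3, (![(1:ℝ),-1,-1]) i * (![(1:ℝ),-1,-1]) i = 1 := by
  intro i; fin_cases i <;> norm_num

lemma signs1_sq : ∀ i : Fin 3, (![(-1:ℝ),1,-1]) i * (![(-1:ℝ),1,-1]) i = 1 := by
  intro i; fin_cases i <;> norm_num

lemma signs2_sq : ∀ i : Fin 3, (![(-1:ℝ),-1,1]) i * (![(-1:ℝ),-1,1]) i = 1 := by
  intro i; fin_cases i <;> norm_num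

lemma part1_all (ν : Measure Mat3) (hν : IsHaarSO3 ν) (s : Fin 3 → ℝ) (a b : Fin 3)
    (hab : a ≠ b) :
    ∫ Q, vee (Q * Matrix.diagonal s - Matrix.diagonal s * Qᵀ) a *
      vee (Q * Matrix.diagonal s - Matrix.diagonal s * Qᵀ) b *
      Real.exp ((Matrix.diagonal s * Qᵀ).trace) ∂ν = 0 := by
  fin_cases a
  · fin_cases b
    · exact absurd rfl hab
    · refine part1_num ν hν s _ _ ![(1:ℝ),-1,-1] signs0_SO3 signs0_sq ?_
      intro Q
      simp only [vee_apply, conj_diag_apply]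
      norm_num [Matrix.cons_val_two]
      try ring
    · refine part1_num ν hν s _ _ ![(1:ℝ),-1,-1] signs0_SO3 signs0_sq ?_
      intro Q
      simp only [vee_apply, conj_diag_apply]
      norm_num [Matrix.cons_val_two]
      try ring
  · fin_cases b
    · refine part1_num ν hν s _ _ ![(-1:ℝ),1,-1] signs1_SO3 signs1_sq ?_
      intro Q
      simp only [vee_apply, conj_diag_apply]
      norm_num [Matrix.cons_val_two]
      try ring
    · exact absurd rfl hab
    · refine part1_num ν hν s _ _ ![(-1:ℝ),1,-1] signs1_SO3 signs1_sq ?_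
      intro Q
      simp only [vee_apply, conj_diag_apply]
      norm_num [Matrix.cons_val_two]
      try ring
  · fin_cases b
    · refine part1_num ν hν s _ _ ![(-1:ℝ),-1,1] signs2_SO3 signs2_sq ?_
      intro Q
      simp only [vee_apply, conj_diag_apply]
      norm_num [Matrix.cons_val_two]
      try ring
    · refine part1_num ν hν s _ _ ![(-1:ℝ),-1,1] signs2_SO3 signs2_sq ?_
      intro Q
      simp only [vee_apply, conj_diag_apply]
      norm_num [Matrix.cons_val_two]
      try ring
    · exact absurd rfl hab

end Stmt8Aux2
section Stmt8Aux3

open Matrix MeasureTheory Real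

lemma part2_num (ν : Measure Mat3) (hν : IsHaarSO3 ν) (s : Fin 3 → ℝ) (p q : Fin 3)
    (v : Mat3 → ℝ) (hv : ∀ Q : Mat3, v Q = Q p q * s q - s p * Q q p) :
    ∫ Q, v Q * v Q * Real.exp ((Matrix.diagonal s * Qᵀ).trace) ∂ν
      = (s p ^ 2 + s q ^ 2) * ∫ Q, Q p q ^ 2 * Real.exp ((Matrix.diagonal s * Qᵀ).trace) ∂ν
        - 2 * s p * s q * ∫ Q, Q p q * Q q p * Real.exp ((Matrix.diagonal s * Qᵀ).trace) ∂ν := by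
  have e : (fun Q : Mat3 => v Q * v Q * Real.exp ((Matrix.diagonal s * Qᵀ).trace))
      = fun Q : Mat3 => (Q p q * s q - s p * Q q p) ^ 2 *
          Real.exp ((Matrix.diagonal s * Qᵀ).trace) := by
    funext Q; rw [hv]; ring
  rw [e, numer_expand ν hν s p q]

lemma part2_all (ν : Measure Mat3) (hν : IsHaarSO3 ν) (s : Fin 3 → ℝ) (i j k : Fin 3)
    (hij : i ≠ j) (hjk : j ≠ k) (hik : i ≠ k) :
    (∫ Q, vee (Q * Matrix.diagonal s - Matrix.diagonal s * Qᵀ) i *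
        vee (Q * Matrix.diagonal s - Matrix.diagonal s * Qᵀ) i *
        Real.exp ((Matrix.diagonal s * Qᵀ).trace) ∂ν) /
      (∫ Q, Real.exp ((Matrix.diagonal s * Qᵀ).trace) ∂ν)
      = (s j ^ 2 + s k ^ 2) *
          ((∫ Q, Q j k ^ 2 * Real.exp ((Matrix.diagonal s * Qᵀ).trace) ∂ν) /
            (∫ Q, Real.exp ((Matrix.diagonal s * Qᵀ).trace) ∂ν))
        - 2 * s j * s k *
          ((∫ Q, Q j k * Q k j * Real.exp ((Matrix.diagonal s * Qᵀ).trace) ∂ν) /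
            (∫ Q, Real.exp ((Matrix.diagonal s * Qᵀ).trace) ∂ν)) := by
  have hi3 : ∀ x : Fin 3, x = 0 ∨ x = 1 ∨ x = 2 := by decide
  rcases hi3 i with rfl|rfl|rfl <;> rcases hi3 j with rfl|rfl|rfl <;> rcases hi3 k with rfl|rfl|rfl
  · exact absurd rfl hij
  · exact absurd rfl hij
  · exact absurd rfl hij
  · exact absurd rfl hik
  · exact absurd rfl hjk
  · have hv : ∀ Q : Mat3, vee (Q * Matrix.diagonal s - Matrix.diagonal s * Qᵀ) (0 : Fin 3)
        = Q 2 1 * s 1 - s 2 * Q 1 2 := by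
      intro Q; norm_num [vee_apply]
    rw [part2_num ν hν s 2 1 _ hv, numer_transpose ν hν s 2 1, numer_mixed_swap ν s 2 1]
    ring
  · exact absurd rfl hik
  · have hv : ∀ Q : Mat3, vee (Q * Matrix.diagonal s - Matrix.diagonal s * Qᵀ) (0 : Fin 3)
        = Q 2 1 * s 1 - s 2 * Q 1 2 := by
      intro Q; norm_num [vee_apply]
    rw [part2_num ν hν s 2 1 _ hv, numer_transpose ν hν s 2 1, numer_mixed_swap ν s 2 1]
    ring
  · exact absurd rfl hjk
  · exact absurd rfl hjk
  · exact absurd rfl hik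
  · have hv : ∀ Q : Mat3, vee (Q * Matrix.diagonal s - Matrix.diagonal s * Qᵀ) (1 : Fin 3)
        = Q 0 2 * s 2 - s 0 * Q 2 0 := by
      intro Q; norm_num [vee_apply]
    rw [part2_num ν hν s 0 2 _ hv, numer_transpose ν hν s 0 2, numer_mixed_swap ν s 0 2]
    ring
  · exact absurd rfl hij
  · exact absurd rfl hij
  · exact absurd rfl hij
  · have hv : ∀ Q : Mat3, vee (Q * Matrix.diagonal s - Matrix.diagonal s * Qᵀ) (1 : Fin 3)
        = Q 0 2 * s 2 - s 0 * Q 2 0 := by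
      intro Q; norm_num [vee_apply]
    rw [part2_num ν hν s 0 2 _ hv, numer_transpose ν hν s 0 2, numer_mixed_swap ν s 0 2]
    ring
  · exact absurd rfl hik
  · exact absurd rfl hjk
  · exact absurd rfl hjk
  · have hv : ∀ Q : Mat3, vee (Q * Matrix.diagonal s - Matrix.diagonal s * Qᵀ) (2 : Fin 3)
        = Q 1 0 * s 0 - s 1 * Q 0 1 := by
      intro Q; norm_num [vee_apply, Matrix.cons_val_two]
    rw [part2_num ν hν s 1 0 _ hv, numer_transpose ν hν s 1 0, numer_mixed_swap ν s 1 0]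
    ring
  · exact absurd rfl hik
  · have hv : ∀ Q : Mat3, vee (Q * Matrix.diagonal s - Matrix.diagonal s * Qᵀ) (2 : Fin 3)
        = Q 1 0 * s 0 - s 1 * Q 0 1 := by
      intro Q; norm_num [vee_apply, Matrix.cons_val_two]
    rw [part2_num ν hν s 1 0 _ hv, numer_transpose ν hν s 1 0, numer_mixed_swap ν s 1 0]
    ring
  · exact absurd rfl hjk
  · exact absurd rfl hik
  · exact absurd rfl hij
  · exact absurd rfl hij
  · exact absurd rfl hij

end Stmt8Aux3
/-- Under the matrix Fisher density with diagonal parameter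
`S = diag(s₁,s₂,s₃)`, the matrix `E[ν_Q ν_Qᵀ]`, `ν_Q = (QS − SQᵀ)∨`, is diagonal,
with `i`-th diagonal entry `(s_j² + s_k²)E[Q_{jk}²] − 2 s_j s_k E[Q_{jk}Q_{kj}]`
for `{i,j,k} = {1,2,3}`; in particular `E[Q_{jk}²] = E[Q_{kj}²]`. -/
theorem stmt8 (ν : Measure Mat3) (hν : IsHaarSO3 ν)
    (s : Fin 3 → ℝ) (S : Mat3) (hS : S = Matrix.diagonal s)
    (E : (Mat3 → ℝ) → ℝ)
    (hE : ∀ f : Mat3 → ℝ,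
      E f = (∫ Q, f Q * Real.exp ((S * Qᵀ).trace) ∂ν) /
        (∫ Q, Real.exp ((S * Qᵀ).trace) ∂ν)) :
    (∀ a b : Fin 3, a ≠ b →
      E (fun Q => vee (Q * S - S * Qᵀ) a * vee (Q * S - S * Qᵀ) b) = 0) ∧
    (∀ i j k : Fin 3, i ≠ j → j ≠ k → i ≠ k →
      E (fun Q => vee (Q * S - S * Qᵀ) i * vee (Q * S - S * Qᵀ) i)
        = (s j ^ 2 + s k ^ 2) * E (fun Q => Q j k ^ 2)
          - 2 * s j * s k * E (fun Q => Q j k * Q k j)) ∧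
    (∀ j k : Fin 3, j ≠ k → E (fun Q => Q j k ^ 2) = E (fun Q => Q k j ^ 2)) := by
  subst hS
  refine ⟨?_, ?_, ?_⟩
  · intro a b hab
    simp only [hE]
    rw [part1_all ν hν s a b hab, zero_div]
  · intro i j k hij hjk hik
    simp only [hE]
    exact part2_all ν hν s i j k hij hjk hik
  · intro j k hjk
    simp only [hE]
    rw [numer_transpose ν hν s j k]


end
end

section
/- Let (R_i, x_i) ∈ SO(3)×ℝⁿ for i = 1,…,N be samples, let U, V ∈ SO(3) and diagonal S ∈ ℝ^{3×3} be given, and set ν_i = (UᵀR_iV·S − S·VᵀR_iᵀU)∨. Let Ē denote the sample mean, and define c̄ov(x,x) = Ē[xxᵀ] − Ē[x]Ē[x]ᵀ, c̄ov(x,ν) = Ē[xνᵀ] − Ē[x]Ē[ν]ᵀ, c̄ov(ν,ν) = Ē[ννᵀ] − Ē[ν]Ē[ν]ᵀ, and assume c̄ov(ν,ν) is invertible. Define P = c̄ov(x,ν)·c̄ov(ν,ν)⁻¹, μ = Ē[x] − P·Ē[ν], and Σ = c̄ov(x,x) − P·c̄ov(x,ν)ᵀ + P(tr(S)I − S)Pᵀ.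 Then these values satisfy the first-order optimality conditions of the conditional log-likelihood: (i) Ē[x − μ − Pν] = 0; (ii) Ē[(x − μ)νᵀ] = P·Ē[ννᵀ]; (iii) Σ − P(tr(S)I − S)Pᵀ = Ē[(x − μ − Pν)(x − μ − Pν)ᵀ]. -/
open Matrix MeasureTheory Real

noncomputable section

set_option linter.unusedSectionVars false

section Helpers
variable {α β ι : Type*} [Fintype α] [Fintype β]

lemma vv_sub_left (u v : α → ℝ) (w : β → ℝ) :
    vecMulVec (u - v) w = vecMulVec u w - vecMulVec v w := by
  ext a b; simp [vecMulVec_apply, sub_mul]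

lemma vv_sub_right (u : α → ℝ) (v w : β → ℝ) :
    vecMulVec u (v - w) = vecMulVec u v - vecMulVec u w := by
  ext a b; simp [vecMulVec_apply, mul_sub]

lemma vv_smul_right (c : ℝ) (u : α → ℝ) (w : β → ℝ) :
    vecMulVec u (c • w) = c • vecMulVec u w := by
  ext a b; simp [vecMulVec_apply]; ring

lemma vv_sum_right {s : Finset ι} (u : α → ℝ) (w : ι → β → ℝ) :
    vecMulVec u (∑ i ∈ s, w i) = ∑ i ∈ s, vecMulVec u (w i) := by
  ext a b; simp [vecMulVec_apply, Finset.mul_sum, Finset.sum_apply, Matrix.sum_apply]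

lemma vv_mulVec_left {γ : Type*} [Fintype γ] (A : Matrix α γ ℝ) (v : γ → ℝ) (w : β → ℝ) :
    vecMulVec (A.mulVec v) w = A * vecMulVec v w := by
  ext a b; simp [vecMulVec_apply, Matrix.mul_apply, mulVec, dotProduct, Finset.sum_mul, mul_assoc]

lemma vv_mulVec_right {γ : Type*} [Fintype γ] (u : α → ℝ) (A : Matrix β γ ℝ) (w : γ → ℝ) :
    vecMulVec u (A.mulVec w) = vecMulVec u w * Aᵀ := by
  ext a b; simp [vecMulVec_apply, Matrix.mul_apply, mulVec, dotProduct, Finset.mul_sum]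
  apply Finset.sum_congr rfl; intros; ring

lemma vv_transpose (u : α → ℝ) (w : β → ℝ) :
    (vecMulVec u w)ᵀ = vecMulVec w u := by
  ext a b; simp [vecMulVec_apply, transpose_apply, mul_comm]

lemma vv_expand {γ δ : Type*} [Fintype γ] [Fintype δ] (u : α → ℝ) (A : Matrix α γ ℝ)
    (v : γ → ℝ) (u' : β → ℝ) (B : Matrix β δ ℝ) (v' : δ → ℝ) :
    vecMulVec (u - A.mulVec v) (u' - B.mulVec v')
      = vecMulVec u u' - vecMulVec u v' * Bᵀ - A * vecMulVec v u'
        + A * vecMulVec v v' * Bᵀ := by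
  rw [vv_sub_left, vv_sub_right, vv_sub_right, vv_mulVec_right, vv_mulVec_left,
    vv_mulVec_left, vv_mulVec_right, ← Matrix.mul_assoc]
  abel

lemma mulVec_sum' {γ : Type*} [Fintype γ] (A : Matrix α γ ℝ) {s : Finset ι} (v : ι → γ → ℝ) :
    A.mulVec (∑ i ∈ s, v i) = ∑ i ∈ s, A.mulVec (v i) := by
  ext a
  simp only [mulVec, dotProduct, Finset.sum_apply, Finset.mul_sum]
  rw [Finset.sum_comm]

lemma sum_center {N : ℕ} (hN : (N:ℝ) ≠ 0) (v : Fin N → α → ℝ) :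
    ∑ i, (v i - (N:ℝ)⁻¹ • ∑ j, v j) = 0 := by
  rw [Finset.sum_sub_distrib, Finset.sum_const, Finset.card_univ, Fintype.card_fin]
  rw [← Nat.cast_smul_eq_nsmul ℝ, smul_smul, mul_inv_cancel₀ hN, one_smul, sub_self]

lemma centered {N : ℕ} (hN : (N:ℝ) ≠ 0) (u : Fin N → α → ℝ) (v : Fin N → β → ℝ) :
    (N:ℝ)⁻¹ • ∑ i, vecMulVec (u i - (N:ℝ)⁻¹ • ∑ j, u j) (v i - (N:ℝ)⁻¹ • ∑ j, v j)
      = (N:ℝ)⁻¹ • ∑ i, vecMulVec (u i) (v i)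
        - vecMulVec ((N:ℝ)⁻¹ • ∑ i, u i) ((N:ℝ)⁻¹ • ∑ i, v i) := by
  ext a b
  simp only [Matrix.smul_apply, Matrix.sub_apply, Matrix.sum_apply, Finset.sum_apply,
    vecMulVec_apply, Pi.sub_apply, Pi.smul_apply, smul_eq_mul]
  rw [Finset.sum_congr rfl (fun i _ => by ring :
    ∀ i ∈ Finset.univ, (u i a - (N:ℝ)⁻¹ * ∑ j, u j a) * (v i b - (N:ℝ)⁻¹ * ∑ j, v j b)
      = u i a * v i b - (N:ℝ)⁻¹ * ((∑ j, v j b) * u i a)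
        - (N:ℝ)⁻¹ * ((∑ j, u j a) * v i b)
        + (N:ℝ)⁻¹ * (N:ℝ)⁻¹ * ((∑ j, u j a) * (∑ j, v j b)))]
  simp only [Finset.sum_add_distrib, Finset.sum_sub_distrib, ← Finset.mul_sum,
    Finset.sum_const, Finset.card_univ, Fintype.card_fin, nsmul_eq_mul]
  field_simp
  ring

end Helpers

/-- The conditional MLE formulas `P = c̄ov(x,ν)c̄ov(ν,ν)⁻¹`,
`μ = Ē[x] − PĒ[ν]`, `Σ = c̄ov(x,x) − P·c̄ov(x,ν)ᵀ + P(tr(S)I − S)Pᵀ` satisfy the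
first-order optimality conditions of the conditional log-likelihood. -/
theorem stmt10 (n N : ℕ) (hN : 0 < N)
    (R : Fin N → Mat3) (hR : ∀ i, R i ∈ SO3) (x : Fin N → (Fin n → ℝ))
    (U V : Mat3) (hU : U ∈ SO3) (hV : V ∈ SO3)
    (s : Fin 3 → ℝ) (S : Mat3) (hS : S = Matrix.diagonal s)
    (nu : Fin N → (Fin 3 → ℝ))
    (hnu : ∀ i, nu i = vee ((Uᵀ * R i * V) * S - S * (Vᵀ * (R i)ᵀ * U)))
    (covxx : Matrix (Fin n) (Fin n) ℝ) (covxn : Matrix (Fin n) (Fin 3) ℝ)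
    (covnn : Mat3)
    (hcovxx : covxx = (N : ℝ)⁻¹ • ∑ i, vecMulVec (x i) (x i)
        - vecMulVec ((N : ℝ)⁻¹ • ∑ i, x i) ((N : ℝ)⁻¹ • ∑ i, x i))
    (hcovxn : covxn = (N : ℝ)⁻¹ • ∑ i, vecMulVec (x i) (nu i)
        - vecMulVec ((N : ℝ)⁻¹ • ∑ i, x i) ((N : ℝ)⁻¹ • ∑ i, nu i))
    (hcovnn : covnn = (N : ℝ)⁻¹ • ∑ i, vecMulVec (nu i) (nu i)
        - vecMulVec ((N : ℝ)⁻¹ • ∑ i, nu i) ((N : ℝ)⁻¹ • ∑ i, nu i))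
    (hinv : IsUnit covnn.det)
    (P : Matrix (Fin n) (Fin 3) ℝ) (hP : P = covxn * covnn⁻¹)
    (μ : Fin n → ℝ) (hμ : μ = (N : ℝ)⁻¹ • ∑ i, x i - P.mulVec ((N : ℝ)⁻¹ • ∑ i, nu i))
    (Sig : Matrix (Fin n) (Fin n) ℝ)
    (hSig : Sig = covxx - P * covxnᵀ + P * (S.trace • (1 : Mat3) - S) * Pᵀ) :
    ((N : ℝ)⁻¹ • ∑ i, (x i - μ - P.mulVec (nu i)) = 0) ∧
    ((N : ℝ)⁻¹ • ∑ i, vecMulVec (x i - μ) (nu i)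
      = P * ((N : ℝ)⁻¹ • ∑ i, vecMulVec (nu i) (nu i))) ∧
    (Sig - P * (S.trace • (1 : Mat3) - S) * Pᵀ
      = (N : ℝ)⁻¹ • ∑ i,
          vecMulVec (x i - μ - P.mulVec (nu i)) (x i - μ - P.mulVec (nu i))) := by
  have hNR : (N:ℝ) ≠ 0 := Nat.cast_ne_zero.mpr hN.ne'
  have hPc : P * covnn = covxn := by
    rw [hP, Matrix.mul_assoc, Matrix.nonsing_inv_mul covnn hinv, Matrix.mul_one]
  set xb : Fin n → ℝ := (N:ℝ)⁻¹ • ∑ i, x i with hxb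
  set nb : Fin 3 → ℝ := (N:ℝ)⁻¹ • ∑ i, nu i with hnb
  set w : Fin N → (Fin n → ℝ) := fun i => x i - P.mulVec (nu i) with hw
  have hwb : (N:ℝ)⁻¹ • ∑ i, w i = μ := by
    rw [hμ, hw]
    simp only [Finset.sum_sub_distrib, smul_sub]
    rw [← mulVec_sum', ← Matrix.mulVec_smul, ← hnb, ← hxb]
  have hy : ∀ i, x i - μ - P.mulVec (nu i) = w i - (N:ℝ)⁻¹ • ∑ j, w j := by
    intro i
    rw [hwb, hw]
    exact sub_right_comm _ _ _
  have hExx : (N:ℝ)⁻¹ • ∑ i, vecMulVec (x i) (x i) = covxx + vecMulVec xb xb := by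
    rw [hcovxx]; abel
  have hExn : (N:ℝ)⁻¹ • ∑ i, vecMulVec (x i) (nu i) = covxn + vecMulVec xb nb := by
    rw [hcovxn]; abel
  have hEnn : (N:ℝ)⁻¹ • ∑ i, vecMulVec (nu i) (nu i) = covnn + vecMulVec nb nb := by
    rw [hcovnn]; abel
  have hExnT : (N:ℝ)⁻¹ • ∑ i, vecMulVec (nu i) (x i)
      = covxnᵀ + vecMulVec nb xb := by
    rw [Finset.sum_congr rfl (fun i _ => (vv_transpose (x i) (nu i)).symm),
      ← Matrix.transpose_sum, ← Matrix.transpose_smul, hExn,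
      Matrix.transpose_add, vv_transpose]
  refine ⟨?_, ?_, ?_⟩
  · -- part (i)
    rw [Finset.sum_congr rfl (fun i _ => hy i), sum_center hNR w, smul_zero]
  · -- part (ii)
    rw [hEnn, Matrix.mul_add, hPc]
    rw [Finset.sum_congr rfl (fun i _ => vv_sub_left (x i) μ (nu i)),
      Finset.sum_sub_distrib, smul_sub, hExn, ← vv_sum_right, ← vv_smul_right,
      ← hnb, hμ, vv_sub_left, vv_mulVec_left]
    abel
  · -- part (iii)
    have hww : ∀ i, vecMulVec (w i) (w i)
        = vecMulVec (x i) (x i) - vecMulVec (x i) (nu i) * Pᵀ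
          - P * vecMulVec (nu i) (x i) + P * vecMulVec (nu i) (nu i) * Pᵀ := by
      intro i
      simp only [hw]
      exact vv_expand (x i) P (nu i) (x i) P (nu i)
    have hvmm : vecMulVec μ μ
        = vecMulVec xb xb - vecMulVec xb nb * Pᵀ
          - P * vecMulVec nb xb + P * vecMulVec nb nb * Pᵀ := by
      rw [hμ]; exact vv_expand xb P nb xb P nb
    have hsum : ∑ i, vecMulVec (w i) (w i)
        = (∑ i, vecMulVec (x i) (x i)) - (∑ i, vecMulVec (x i) (nu i)) * Pᵀ
          - P * (∑ i, vecMulVec (nu i) (x i))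
          + P * (∑ i, vecMulVec (nu i) (nu i)) * Pᵀ := by
      rw [Finset.sum_congr rfl (fun i _ => hww i), Finset.sum_add_distrib,
        Finset.sum_sub_distrib, Finset.sum_sub_distrib]
      simp [Matrix.mul_sum, Matrix.sum_mul, Matrix.mul_assoc]
    have hEww : (N:ℝ)⁻¹ • ∑ i, vecMulVec (w i) (w i)
        = (covxx + vecMulVec xb xb) - (covxn + vecMulVec xb nb) * Pᵀ
          - P * (covxnᵀ + vecMulVec nb xb)
          + P * (covnn + vecMulVec nb nb) * Pᵀ := by
      rw [hsum, smul_add, smul_sub, smul_sub, ← Matrix.smul_mul, ← Matrix.mul_smul,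
        ← Matrix.smul_mul, ← Matrix.mul_smul, hExx, hExn, hExnT, hEnn]
    have hRHS : (N:ℝ)⁻¹ • ∑ i,
        vecMulVec (x i - μ - P.mulVec (nu i)) (x i - μ - P.mulVec (nu i))
        = covxx - P * covxnᵀ := by
      rw [Finset.sum_congr rfl (fun i _ => by rw [hy i]), centered hNR w w, hwb,
        hEww, hvmm, Matrix.add_mul, Matrix.mul_add, Matrix.mul_add,
        Matrix.add_mul, hPc]
      abel
    rw [hRHS, hSig]
    abel


end
end

section
/- Let (R_i, y_i) ∈ SO(3)×ℝⁿ with real weights w_i summing to 1, i = 1,…,N, let U, V ∈ SO(3), diagonal S ∈ ℝ^{3×3}, μ ∈ ℝⁿ, P ∈ ℝ^{n×3}, and let Σ_c ∈ ℝ^{n×n} be symmetric positive definite with Σ = Σ_c + P(tr(S)I − S)Pᵀ. Set ν_i = (UᵀR_iV·S − S·VᵀR_iᵀU)∨ and x_i = Σ_c^{1/2} y_i + μ + Pν_i. Let Ē denote the weighted mean Ē[z] = Σ_i w_i z_i, and define the weighted covariances c̄ov(·,·) accordingly. Assume Ē[y] = 0, Ē[yyᵀ] = I_n, Ē[ν]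 = 0, Ē[yνᵀ] = 0, and that c̄ov(ν,ν) is invertible. Then the estimation formulas recover the parameters: c̄ov(x,ν)·c̄ov(ν,ν)⁻¹ = P, Ē[x] − P·Ē[ν] = μ, and c̄ov(x,x) − P·c̄ov(x,ν)ᵀ + P(tr(S)I − S)Pᵀ = Σ. -/
open Matrix MeasureTheory Real

noncomputable section

section vmvHelpers

variable {k l m N : ℕ}

lemma vmv_add_left (a b : Fin k → ℝ) (c : Fin l → ℝ) :
    vecMulVec (a + b) c = vecMulVec a c + vecMulVec b c := by
  ext i j; simp [vecMulVec_apply, add_mul]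

lemma vmv_add_right (a : Fin k → ℝ) (b c : Fin l → ℝ) :
    vecMulVec a (b + c) = vecMulVec a b + vecMulVec a c := by
  ext i j; simp [vecMulVec_apply, mul_add]

lemma vmv_zero_left (c : Fin l → ℝ) : vecMulVec (0 : Fin k → ℝ) c = 0 := by
  ext i j; simp [vecMulVec_apply]

lemma vmv_zero_right (a : Fin k → ℝ) : vecMulVec a (0 : Fin l → ℝ) = 0 := by
  ext i j; simp [vecMulVec_apply]

lemma vmv_sum_left (w : Fin N → ℝ) (f : Fin N → Fin k → ℝ) (c : Fin l → ℝ) :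
    ∑ i, w i • vecMulVec (f i) c = vecMulVec (∑ i, w i • f i) c := by
  ext a b
  simp only [Matrix.sum_apply, Matrix.smul_apply, vecMulVec_apply, smul_eq_mul,
    Finset.sum_apply, Pi.smul_apply, Finset.sum_mul]
  exact Finset.sum_congr rfl fun i _ => by ring

lemma vmv_sum_right (w : Fin N → ℝ) (a : Fin k → ℝ) (f : Fin N → Fin l → ℝ) :
    ∑ i, w i • vecMulVec a (f i) = vecMulVec a (∑ i, w i • f i) := by
  ext x b
  simp only [Matrix.sum_apply, Matrix.smul_apply, vecMulVec_apply, smul_eq_mul,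
    Finset.sum_apply, Pi.smul_apply, Finset.mul_sum]
  exact Finset.sum_congr rfl fun i _ => by ring

lemma mul_vmv (M : Matrix (Fin k) (Fin l) ℝ) (a : Fin l → ℝ) (c : Fin m → ℝ) :
    vecMulVec (M *ᵥ a) c = M * vecMulVec a c := by
  ext i j
  simp only [vecMulVec_apply, Matrix.mul_apply, Matrix.mulVec, dotProduct,
    Finset.sum_mul]
  exact Finset.sum_congr rfl fun x _ => by ring

lemma vmv_mul (a : Fin k → ℝ) (c : Fin l → ℝ) (M : Matrix (Fin m) (Fin l) ℝ) :
    vecMulVec a (M *ᵥ c) = vecMulVec a c * Mᵀ := by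
  ext i j
  simp only [vecMulVec_apply, Matrix.mul_apply, Matrix.mulVec, dotProduct,
    Matrix.transpose_apply, Finset.mul_sum]
  exact Finset.sum_congr rfl fun x _ => by ring

lemma vmv_transpose (a : Fin k → ℝ) (c : Fin l → ℝ) :
    (vecMulVec a c)ᵀ = vecMulVec c a := by
  ext i j; simp [vecMulVec_apply, mul_comm]

lemma mulVec_sum'_s12 (M : Matrix (Fin k) (Fin l) ℝ) (f : Fin N → Fin l → ℝ) :
    ∑ i, M *ᵥ f i = M *ᵥ ∑ i, f i := by
  ext j
  simp only [Finset.sum_apply, Matrix.mulVec, dotProduct, Finset.mul_sum]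
  exact Finset.sum_comm

lemma sum_w_conj {p : ℕ} (w : Fin N → ℝ) (f : Fin N → Matrix (Fin k) (Fin l) ℝ)
    (M : Matrix (Fin m) (Fin k) ℝ) (Q : Matrix (Fin l) (Fin p) ℝ) :
    ∑ i, w i • (M * f i * Q) = M * (∑ i, w i • f i) * Q := by
  rw [Matrix.mul_sum, Matrix.sum_mul]
  exact Finset.sum_congr rfl fun i _ => by
    rw [Matrix.mul_smul, Matrix.smul_mul]

lemma sum_w_mulleft (w : Fin N → ℝ) (f : Fin N → Matrix (Fin k) (Fin l) ℝ)
    (M : Matrix (Fin m) (Fin k) ℝ) :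
    ∑ i, w i • (M * f i) = M * ∑ i, w i • f i := by
  rw [Matrix.mul_sum]
  exact Finset.sum_congr rfl fun i _ => by rw [Matrix.mul_smul]

lemma sum_w_mulright {p : ℕ} (w : Fin N → ℝ) (f : Fin N → Matrix (Fin k) (Fin l) ℝ)
    (Q : Matrix (Fin l) (Fin p) ℝ) :
    ∑ i, w i • (f i * Q) = (∑ i, w i • f i) * Q := by
  rw [Matrix.sum_mul]
  exact Finset.sum_congr rfl fun i _ => by rw [Matrix.smul_mul]

end vmvHelpers

/-- The marginal-conditional MLE applied to the sigma points of an MFG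
recovers its parameters `(P, μ, Σ)`. -/
theorem stmt12 (n N : ℕ) (w : Fin N → ℝ) (hw : ∑ i, w i = 1)
    (R : Fin N → Mat3) (hR : ∀ i, R i ∈ SO3) (y : Fin N → (Fin n → ℝ))
    (U V : Mat3) (hU : U ∈ SO3) (hV : V ∈ SO3)
    (s : Fin 3 → ℝ) (S : Mat3) (hS : S = Matrix.diagonal s)
    (μ : Fin n → ℝ) (P : Matrix (Fin n) (Fin 3) ℝ)
    (Sc : Matrix (Fin n) (Fin n) ℝ) (hSc : Sc.PosDef)
    (Sig : Matrix (Fin n) (Fin n) ℝ)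
    (hSigdef : Sig = Sc + P * (S.trace • (1 : Mat3) - S) * Pᵀ)
    (nu : Fin N → (Fin 3 → ℝ))
    (hnu : ∀ i, nu i = vee ((Uᵀ * R i * V) * S - S * (Vᵀ * (R i)ᵀ * U)))
    (x : Fin N → (Fin n → ℝ))
    (hx : ∀ i, x i = ((hSc.isHermitian.eigenvectorUnitary : Matrix (Fin n) (Fin n) ℝ) *
        diagonal (RCLike.ofReal ∘ Real.sqrt ∘ hSc.isHermitian.eigenvalues) *
        (star hSc.isHermitian.eigenvectorUnitary : Matrix (Fin n) (Fin n) ℝ)) *ᵥ y i + μ + P *ᵥ nu i)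
    (hEy : ∑ i, w i • y i = 0)
    (hEyy : ∑ i, w i • vecMulVec (y i) (y i) = (1 : Matrix (Fin n) (Fin n) ℝ))
    (hEnu : ∑ i, w i • nu i = 0)
    (hEynu : ∑ i, w i • vecMulVec (y i) (nu i) = 0)
    (covxx : Matrix (Fin n) (Fin n) ℝ) (covxn : Matrix (Fin n) (Fin 3) ℝ)
    (covnn : Mat3)
    (hcovxx : covxx = ∑ i, w i • vecMulVec (x i) (x i)
        - vecMulVec (∑ i, w i • x i) (∑ i, w i • x i))
    (hcovxn : covxn = ∑ i, w i • vecMulVec (x i) (nu i)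
        - vecMulVec (∑ i, w i • x i) (∑ i, w i • nu i))
    (hcovnn : covnn = ∑ i, w i • vecMulVec (nu i) (nu i)
        - vecMulVec (∑ i, w i • nu i) (∑ i, w i • nu i))
    (hinv : IsUnit covnn.det) :
    covxn * covnn⁻¹ = P ∧
    (∑ i, w i • x i) - P *ᵥ (∑ i, w i • nu i) = μ ∧
    covxx - P * covxnᵀ + P * (S.trace • (1 : Mat3) - S) * Pᵀ = Sig := by
  have hSc' := hSc.posSemidef
  have hAsym : ((hSc.isHermitian.eigenvectorUnitary : Matrix (Fin n) (Fin n) ℝ) *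
        diagonal (RCLike.ofReal ∘ Real.sqrt ∘ hSc.isHermitian.eigenvalues) *
        (star hSc.isHermitian.eigenvectorUnitary : Matrix (Fin n) (Fin n) ℝ))ᵀ = ((hSc.isHermitian.eigenvectorUnitary : Matrix (Fin n) (Fin n) ℝ) *
        diagonal (RCLike.ofReal ∘ Real.sqrt ∘ hSc.isHermitian.eigenvalues) *
        (star hSc.isHermitian.eigenvectorUnitary : Matrix (Fin n) (Fin n) ℝ)) := by
    rw [← conjTranspose_eq_transpose_of_trivial]
    simp [Matrix.star_eq_conjTranspose, Matrix.mul_assoc]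
  have hAA : ((hSc.isHermitian.eigenvectorUnitary : Matrix (Fin n) (Fin n) ℝ) *
        diagonal (RCLike.ofReal ∘ Real.sqrt ∘ hSc.isHermitian.eigenvalues) *
        (star hSc.isHermitian.eigenvectorUnitary : Matrix (Fin n) (Fin n) ℝ)) * ((hSc.isHermitian.eigenvectorUnitary : Matrix (Fin n) (Fin n) ℝ) *
        diagonal (RCLike.ofReal ∘ Real.sqrt ∘ hSc.isHermitian.eigenvalues) *
        (star hSc.isHermitian.eigenvectorUnitary : Matrix (Fin n) (Fin n) ℝ)) = Sc := by
    have hspec := hSc.isHermitian.spectral_theorem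
    have hu : (star hSc.isHermitian.eigenvectorUnitary : Matrix (Fin n) (Fin n) ℝ) * (hSc.isHermitian.eigenvectorUnitary : Matrix (Fin n) (Fin n) ℝ) = 1 :=
      Unitary.coe_star_mul_self _
    conv_rhs => rw [hspec, Unitary.conjStarAlgAut_apply]
    simp only [Matrix.mul_assoc]
    rw [← Matrix.mul_assoc (star _) (_ : Matrix (Fin n) (Fin n) ℝ), hu, Matrix.one_mul,
      ← Matrix.mul_assoc (diagonal _) (diagonal _), diagonal_mul_diagonal]
    congr 3
    funext i
    simp [Real.mul_self_sqrt (hSc.eigenvalues_pos i).le]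
  set A := ((hSc.isHermitian.eigenvectorUnitary : Matrix (Fin n) (Fin n) ℝ) *
        diagonal (RCLike.ofReal ∘ Real.sqrt ∘ hSc.isHermitian.eigenvalues) *
        (star hSc.isHermitian.eigenvectorUnitary : Matrix (Fin n) (Fin n) ℝ)) with hAdef
  have hx' : ∀ i, x i = A *ᵥ y i + μ + P *ᵥ nu i := hx
  -- mean of x
  have hEx : ∑ i, w i • x i = μ := by
    have hxe : ∀ i, w i • x i = A *ᵥ (w i • y i) + w i • μ + P *ᵥ (w i • nu i) := by
      intro i; rw [hx' i]; simp [smul_add, Matrix.mulVec_smul]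
    rw [Finset.sum_congr rfl fun i _ => hxe i]
    rw [Finset.sum_add_distrib, Finset.sum_add_distrib, mulVec_sum'_s12, mulVec_sum'_s12,
      hEy, hEnu, ← Finset.sum_smul, hw]
    simp
  set Nnu : Mat3 := ∑ i, w i • vecMulVec (nu i) (nu i) with hNnu
  have hEnuy : ∑ i, w i • vecMulVec (nu i) (y i) = 0 := by
    have := congrArg Matrix.transpose hEynu
    simpa [Matrix.transpose_sum, vmv_transpose, Matrix.transpose_smul] using this
  have hMxn : ∑ i, w i • vecMulVec (x i) (nu i) = P * Nnu := by
    have hxe : ∀ i, w i • vecMulVec (x i) (nu i) =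
        w i • (A * vecMulVec (y i) (nu i)) + w i • vecMulVec μ (nu i)
          + w i • (P * vecMulVec (nu i) (nu i)) := by
      intro i
      rw [hx' i]
      simp only [vmv_add_left, mul_vmv, smul_add]
    rw [Finset.sum_congr rfl fun i _ => hxe i, Finset.sum_add_distrib,
      Finset.sum_add_distrib, sum_w_mulleft, sum_w_mulleft, hEynu,
      vmv_sum_right, hEnu, vmv_zero_right, ← hNnu]
    simp
  have hcovnn' : covnn = Nnu := by
    rw [hcovnn, hEnu, vmv_zero_left, sub_zero]
  have hcovxn' : covxn = P * covnn := by
    rw [hcovxn, hEnu, vmv_zero_right, sub_zero, hMxn, hcovnn']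
  refine ⟨?_, ?_, ?_⟩
  · rw [hcovxn', Matrix.mul_assoc, Matrix.mul_nonsing_inv covnn hinv, Matrix.mul_one]
  · rw [hEx, hEnu]; simp
  · have hMxx : ∑ i, w i • vecMulVec (x i) (x i) =
        Sc + vecMulVec μ μ + P * Nnu * Pᵀ := by
      have hxe : ∀ i, w i • vecMulVec (x i) (x i) =
          w i • (A * (vecMulVec (y i) (y i) * Aᵀ))
          + w i • (A * (vecMulVec (y i) (nu i) * Pᵀ))
          + w i • (P * (vecMulVec (nu i) (y i) * Aᵀ))
          + w i • (P * (vecMulVec (nu i) (nu i) * Pᵀ))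
          + w i • (A * vecMulVec (y i) μ)
          + w i • (vecMulVec μ (y i) * Aᵀ)
          + w i • (P * vecMulVec (nu i) μ)
          + w i • (vecMulVec μ (nu i) * Pᵀ)
          + w i • vecMulVec μ μ := by
        intro i
        rw [hx' i]
        simp only [vmv_add_left, vmv_add_right, mul_vmv, vmv_mul, Matrix.add_mul,
          Matrix.mul_add, smul_add, Matrix.mul_assoc]
        abel
      rw [Finset.sum_congr rfl fun i _ => hxe i]
      simp only [Finset.sum_add_distrib]
      simp only [← Matrix.mul_assoc]
      rw [sum_w_conj, sum_w_conj, sum_w_conj, sum_w_conj, sum_w_mulleft,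
        sum_w_mulleft, sum_w_mulright, sum_w_mulright]
      rw [hEyy, hEynu, hEnuy, ← hNnu, vmv_sum_left, vmv_sum_right, vmv_sum_left,
        vmv_sum_right, hEy, hEnu, vmv_zero_left, vmv_zero_right, vmv_zero_left,
        vmv_zero_right, ← Finset.sum_smul, hw, one_smul]
      rw [Matrix.mul_one, hAsym, hAA]
      simp only [Matrix.mul_zero, Matrix.zero_mul, add_zero, zero_add]
      abel
    have hcovxx' : covxx = Sc + P * Nnu * Pᵀ := by
      rw [hcovxx, hMxx, hEx]
      abel
    have hNsym : Nnuᵀ = Nnu := by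
      rw [hNnu]
      simp [Matrix.transpose_sum, Matrix.transpose_smul, vmv_transpose]
    rw [hcovxx', hcovxn', hcovnn', Matrix.transpose_mul, hNsym,
      ← Matrix.mul_assoc, hSigdef]
    abel

end
end

section
/- Let p(R,x) be the matrix Fisher–Gaussian density with parameters (μ, Σ, P, U, S, V) on SO(3)×ℝⁿ, let μ' ∈ ℝⁿ, and let Σ' ∈ ℝ^{n×n} be symmetric positive definite. Then for all R ∈ SO(3) and y ∈ ℝⁿ: ∫_{ℝⁿ} p(R,x) · ((2π)ⁿ det Σ')^{−1/2} · exp(−(1/2)(y − x − μ')ᵀ(Σ')⁻¹(y − x − μ')) dx equals the matrix Fisher–Gaussian density with parameters (μ + μ', Σ + Σ', P, U, S, V) evaluated at (R, y). In other words, adding an independent Gaussian N(μ', Σ') to the linear component of an MFG random variable yields an MFG with shifted mean and enlarged covariance. -/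
open Matrix MeasureTheory Real

noncomputable section

lemma sqrt_pow' (x : ℝ) (hx : 0 ≤ x) (n : ℕ) : Real.sqrt (x ^ n) = Real.sqrt x ^ n := by
  rw [show x ^ n = (Real.sqrt x ^ n)^2 by
    rw [← pow_mul, mul_comm, pow_mul, Real.sq_sqrt hx], Real.sqrt_sq (by positivity)]

lemma herm_symm {M : Matrix (Fin n) (Fin n) ℝ} (hM : M.IsHermitian) : Mᵀ = M := by
  have := hM.eq
  simpa [Matrix.conjTranspose_eq_transpose_of_trivial] using this

lemma symm_dot {M : Matrix (Fin n) (Fin n) ℝ} (hM : M.IsHermitian) (x y : Fin n → ℝ) :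
    x ⬝ᵥ M *ᵥ y = y ⬝ᵥ M *ᵥ x := by
  rw [Matrix.dotProduct_mulVec, ← Matrix.mulVec_transpose, herm_symm hM, dotProduct_comm]

lemma gauss_int (C : Matrix (Fin n) (Fin n) ℝ) (hC : C.PosDef) :
    ∫ x : Fin n → ℝ, Real.exp (-(1/2) * (x ⬝ᵥ C *ᵥ x)) =
      Real.sqrt ((2 * Real.pi) ^ n / C.det) := by
  obtain ⟨M, hMM, hMsd⟩ : ∃ M : Matrix (Fin n) (Fin n) ℝ, M * M = C ∧ M.PosSemidef := by
    open scoped MatrixOrder in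
    exact ⟨CFC.sqrt C, CFC.sqrt_mul_sqrt_self C hC.posSemidef.nonneg, (CFC.sqrt_nonneg C).posSemidef⟩
  have hdetC : 0 < C.det := hC.det_pos
  have hdet2 : M.det * M.det = C.det := by rw [← Matrix.det_mul, hMM]
  have hdetM_ne : M.det ≠ 0 := by
    intro h; rw [h, mul_zero] at hdet2; exact (ne_of_gt hdetC) hdet2.symm
  have habs : |M.det| = Real.sqrt C.det := by
    rw [← hdet2, ← abs_mul_abs_self, Real.sqrt_mul_self (abs_nonneg _)]
  have hquad : ∀ x : Fin n → ℝ, x ⬝ᵥ C *ᵥ x = (M *ᵥ x) ⬝ᵥ (M *ᵥ x) := by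
    intro x
    rw [← hMM, ← Matrix.mulVec_mulVec, Matrix.dotProduct_mulVec, ← Matrix.mulVec_transpose,
      herm_symm hMsd.1]
  have hmap := Real.map_matrix_volume_pi_eq_smul_volume_pi hdetM_ne
  have key : ∫ x : Fin n → ℝ, Real.exp (-(1/2) * (x ⬝ᵥ C *ᵥ x))
      = |M.det|⁻¹ * ∫ y : Fin n → ℝ, Real.exp (-(1/2) * (y ⬝ᵥ y)) := by
    have hmeas : AEMeasurable (⇑(Matrix.toLin' M)) (volume : Measure (Fin n → ℝ)) :=
      (Matrix.toLin' M).continuous_of_finiteDimensional.aemeasurable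
    have hcont : Continuous (fun y : Fin n → ℝ => Real.exp (-(1/2) * (y ⬝ᵥ y))) := by
      apply Real.continuous_exp.comp
      simp only [dotProduct]
      fun_prop
    have := MeasureTheory.integral_map (μ := (volume : Measure (Fin n → ℝ)))
      hmeas (f := fun y : Fin n → ℝ => Real.exp (-(1/2) * (y ⬝ᵥ y)))
      (hcont.aestronglyMeasurable)
    rw [hmap, MeasureTheory.integral_smul_measure] at this
    simp only [Matrix.toLin'_apply] at this
    simp_rw [hquad]
    rw [← this]
    congr 1
    rw [ENNReal.toReal_ofReal (by positivity), abs_inv]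
  rw [key]
  have hy : ∫ y : Fin n → ℝ, Real.exp (-(1/2) * (y ⬝ᵥ y)) = Real.sqrt ((2*Real.pi)^n) := by
    have h2 : ∀ y : Fin n → ℝ, Real.exp (-(1/2) * (y ⬝ᵥ y)) = ∏ i, Real.exp (-(1/2) * (y i)^2) := by
      intro y
      rw [← Real.exp_sum]
      congr 1
      simp [dotProduct, Finset.mul_sum, sq]
    simp_rw [h2]
    rw [MeasureTheory.integral_fintype_prod_volume_eq_pow (ι := Fin n) (fun t : ℝ => Real.exp (-(1/2) * t^2))]
    have h1 : ∫ t : ℝ, Real.exp (-(1/2) * t^2) = Real.sqrt (2*Real.pi) := by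
      have := integral_gaussian (1/2)
      rw [this]
      norm_num
      rw [mul_comm]
    rw [h1, Fintype.card_fin, sqrt_pow' _ (by positivity)]
  rw [hy, habs, Real.sqrt_div (by positivity : (0:ℝ) ≤ (2*Real.pi)^n), div_eq_mul_inv, mul_comm]

lemma woodbury {A B : Matrix (Fin n) (Fin n) ℝ} (hA : A.PosDef) (hB : B.PosDef) :
    B⁻¹ - B⁻¹ * (A⁻¹ + B⁻¹)⁻¹ * B⁻¹ = (A + B)⁻¹ := by
  have hABpd : (A + B).PosDef := hA.add hB
  have hAu : IsUnit A.det := isUnit_iff_ne_zero.2 hA.det_pos.ne'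
  have hBu : IsUnit B.det := isUnit_iff_ne_zero.2 hB.det_pos.ne'
  have hABu : IsUnit (A + B).det := isUnit_iff_ne_zero.2 hABpd.det_pos.ne'
  have hAi : A⁻¹ * A = 1 := Matrix.nonsing_inv_mul A hAu
  have hAi' : A * A⁻¹ = 1 := Matrix.mul_nonsing_inv A hAu
  have hBi : B⁻¹ * B = 1 := Matrix.nonsing_inv_mul B hBu
  have hBi' : B * B⁻¹ = 1 := Matrix.mul_nonsing_inv B hBu
  have hABi : (A + B)⁻¹ * (A + B) = 1 := Matrix.nonsing_inv_mul _ hABu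
  have hCfact : A⁻¹ + B⁻¹ = A⁻¹ * (A + B) * B⁻¹ := by
    rw [Matrix.mul_add, Matrix.add_mul, hAi, Matrix.one_mul, Matrix.mul_assoc, hBi',
      Matrix.mul_one, add_comm]
  have hCinv : (A⁻¹ + B⁻¹)⁻¹ = B * (A + B)⁻¹ * A := by
    rw [hCfact, Matrix.mul_inv_rev, Matrix.mul_inv_rev,
      Matrix.nonsing_inv_nonsing_inv _ hAu, Matrix.nonsing_inv_nonsing_inv _ hBu,
      Matrix.mul_assoc]
  rw [hCinv]
  have h1 : B⁻¹ * (B * (A + B)⁻¹ * A) * B⁻¹ = (A + B)⁻¹ * A * B⁻¹ := by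
    simp only [← Matrix.mul_assoc]
    rw [hBi, Matrix.one_mul]
  rw [h1]
  have h2 : B⁻¹ = (A + B)⁻¹ * (A + B) * B⁻¹ := by rw [hABi, Matrix.one_mul]
  calc B⁻¹ - (A + B)⁻¹ * A * B⁻¹
      = (A + B)⁻¹ * (A + B) * B⁻¹ - (A + B)⁻¹ * A * B⁻¹ := by rw [← h2]
    _ = (A + B)⁻¹ * ((A + B) * B⁻¹ - A * B⁻¹) := by
        simp only [Matrix.mul_sub, Matrix.mul_assoc]
    _ = (A + B)⁻¹ * ((A + B - A) * B⁻¹) := by rw [Matrix.sub_mul]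
    _ = (A + B)⁻¹ := by rw [add_sub_cancel_left, hBi', Matrix.mul_one]

lemma det_sumC {A B : Matrix (Fin n) (Fin n) ℝ} (hA : A.PosDef) (hB : B.PosDef) :
    (A⁻¹ + B⁻¹).det = (A + B).det / (A.det * B.det) := by
  have hCfact : A⁻¹ + B⁻¹ = A⁻¹ * (A + B) * B⁻¹ := by
    have hAi : A⁻¹ * A = 1 := Matrix.nonsing_inv_mul A (isUnit_iff_ne_zero.2 hA.det_pos.ne')
    have hBi' : B * B⁻¹ = 1 := Matrix.mul_nonsing_inv B (isUnit_iff_ne_zero.2 hB.det_pos.ne')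
    rw [Matrix.mul_add, Matrix.add_mul, hAi, Matrix.one_mul, Matrix.mul_assoc, hBi',
      Matrix.mul_one, add_comm]
  rw [hCfact, Matrix.det_mul, Matrix.det_mul, Matrix.det_nonsing_inv, Matrix.det_nonsing_inv]
  simp only [Ring.inverse_eq_inv']
  field_simp

lemma sumC_posdef {A B : Matrix (Fin n) (Fin n) ℝ} (hA : A.PosDef) (hB : B.PosDef) :
    (A⁻¹ + B⁻¹).PosDef := hA.inv.add hB.inv

lemma complete_square {A B : Matrix (Fin n) (Fin n) ℝ} (hA : A.PosDef) (hB : B.PosDef)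
    (u d : Fin n → ℝ) :
    u ⬝ᵥ A⁻¹ *ᵥ u + (d - u) ⬝ᵥ B⁻¹ *ᵥ (d - u)
      = (u - (A⁻¹ + B⁻¹)⁻¹ *ᵥ (B⁻¹ *ᵥ d)) ⬝ᵥ
          ((A⁻¹ + B⁻¹) *ᵥ (u - (A⁻¹ + B⁻¹)⁻¹ *ᵥ (B⁻¹ *ᵥ d)))
        + d ⬝ᵥ (A + B)⁻¹ *ᵥ d := by
  set C := A⁻¹ + B⁻¹ with hCdef
  have hC : C.PosDef := sumC_posdef hA hB
  have hCu : IsUnit C.det := isUnit_iff_ne_zero.2 hC.det_pos.ne'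
  set w : Fin n → ℝ := C⁻¹ *ᵥ (B⁻¹ *ᵥ d) with hwdef
  have hCw : C *ᵥ w = B⁻¹ *ᵥ d := by
    rw [hwdef, Matrix.mulVec_mulVec, Matrix.mul_nonsing_inv _ hCu, Matrix.one_mulVec]
  have hBsym : (B⁻¹).IsHermitian := hB.inv.1
  have hCsym : C.IsHermitian := hC.1
  have e1 : (d - u) ⬝ᵥ B⁻¹ *ᵥ (d - u)
      = d ⬝ᵥ B⁻¹ *ᵥ d - 2 * (u ⬝ᵥ B⁻¹ *ᵥ d) + u ⬝ᵥ B⁻¹ *ᵥ u := by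
    have hs := symm_dot hBsym u d
    simp only [Matrix.mulVec_sub, dotProduct_sub, sub_dotProduct]
    linarith
  have e2 : (u - w) ⬝ᵥ C *ᵥ (u - w)
      = u ⬝ᵥ C *ᵥ u - 2 * (u ⬝ᵥ C *ᵥ w) + w ⬝ᵥ C *ᵥ w := by
    have hs := symm_dot hCsym u w
    simp only [Matrix.mulVec_sub, dotProduct_sub, sub_dotProduct]
    linarith
  have e3 : u ⬝ᵥ C *ᵥ u = u ⬝ᵥ A⁻¹ *ᵥ u + u ⬝ᵥ B⁻¹ *ᵥ u := by
    rw [hCdef, Matrix.add_mulVec, dotProduct_add]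
  have e4 : u ⬝ᵥ C *ᵥ w = u ⬝ᵥ B⁻¹ *ᵥ d := by rw [hCw]
  have e5 : w ⬝ᵥ C *ᵥ w = d ⬝ᵥ B⁻¹ *ᵥ d - d ⬝ᵥ (A + B)⁻¹ *ᵥ d := by
    rw [hCw, symm_dot hBsym w d, hwdef, Matrix.mulVec_mulVec, Matrix.mulVec_mulVec]
    have hw2 : B⁻¹ - B⁻¹ * C⁻¹ * B⁻¹ = (A + B)⁻¹ := by
      rw [hCdef]; exact woodbury hA hB
    have h3 : B⁻¹ * C⁻¹ * B⁻¹ = B⁻¹ - (A + B)⁻¹ := by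
      rw [← hw2, sub_sub_cancel]
    rw [h3, Matrix.sub_mulVec, dotProduct_sub]
  rw [e1, e2, e3, e4, e5]
  ring

lemma gauss_int_shift (C : Matrix (Fin n) (Fin n) ℝ) (hC : C.PosDef) (z : Fin n → ℝ) :
    ∫ x : Fin n → ℝ, Real.exp (-(1/2) * ((x - z) ⬝ᵥ C *ᵥ (x - z))) =
      Real.sqrt ((2 * Real.pi) ^ n / C.det) := by
  rw [← gauss_int C hC]
  exact MeasureTheory.integral_sub_right_eq_self
    (fun x : Fin n → ℝ => Real.exp (-(1/2) * (x ⬝ᵥ C *ᵥ x))) z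

lemma sqrt_combine {p a b s : ℝ} (hp : 0 < p) (ha : 0 < a) (hb : 0 < b) (hs : 0 < s) :
    (Real.sqrt (p * a))⁻¹ * (Real.sqrt (p * b))⁻¹ * Real.sqrt (p / (s / (a * b)))
      = (Real.sqrt (p * s))⁻¹ := by
  have h1 : p / (s / (a * b)) = p * a * b / s := by field_simp
  rw [h1, Real.sqrt_mul hp.le, Real.sqrt_mul hp.le, Real.sqrt_div (by positivity) s,
    Real.sqrt_mul (by positivity) b, Real.sqrt_mul hp.le s]
  have h2 : (0:ℝ) < Real.sqrt p := Real.sqrt_pos.2 hp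
  have h3 : (0:ℝ) < Real.sqrt a := Real.sqrt_pos.2 ha
  have h4 : (0:ℝ) < Real.sqrt b := Real.sqrt_pos.2 hb
  have h5 : (0:ℝ) < Real.sqrt s := Real.sqrt_pos.2 hs
  field_simp
  ring
  exact Real.sqrt_mul hp.le a

/-- Adding an independent Gaussian `N(μ', Σ')` to the linear component
of an MFG random variable yields an MFG with shifted mean and enlarged covariance. -/
theorem stmt13 (n : ℕ) (ν : Measure Mat3) (hν : IsHaarSO3 ν)
    (μ μ' : Fin n → ℝ) (Sig Sig' : Matrix (Fin n) (Fin n) ℝ)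
    (P : Matrix (Fin n) (Fin 3) ℝ) (U V : Mat3) (hU : U ∈ SO3) (hV : V ∈ SO3)
    (s : Fin 3 → ℝ) (S : Mat3) (hS : S = Matrix.diagonal s)
    (hSig : Sig.IsSymm) (hc : (sigmaC Sig P S).PosDef)
    (hSig' : Sig'.IsSymm) (hpd' : Sig'.PosDef) :
    ∀ R ∈ SO3, ∀ y : Fin n → ℝ,
      (∫ x : Fin n → ℝ,
          mfg ν μ Sig P U S V R x *
            ((Real.sqrt ((2 * Real.pi) ^ n * Sig'.det))⁻¹ *
              Real.exp (-(1/2) * ((y - x - μ') ⬝ᵥ (Sig'⁻¹ *ᵥ (y - x - μ'))))))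
        = mfg ν (μ + μ') (Sig + Sig') P U S V R y := by
  intro R hR y
  classical
  set A := sigmaC Sig P S with hAdef
  set B := Sig' with hBdef
  have hA : A.PosDef := hc
  have hB : B.PosDef := hpd'
  have hABpd : (A + B).PosDef := hA.add hB
  set p : ℝ := (2 * Real.pi) ^ n with hpdef
  have hp : 0 < p := by positivity
  set m := μ + P.mulVec (nuR U S V R) with hmdef
  set d := y - m - μ' with hddef
  set C := A⁻¹ + B⁻¹ with hCdef
  have hCpd : C.PosDef := sumC_posdef hA hB
  set w := C⁻¹ *ᵥ (B⁻¹ *ᵥ d) with hwdef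
  set T := Real.exp ((U * S * Vᵀ * Rᵀ).trace) with hTdef
  set c1 : ℝ := (cF ν (U * S * Vᵀ) * Real.sqrt (p * A.det))⁻¹ with hc1
  set c2 : ℝ := (Real.sqrt (p * B.det))⁻¹ with hc2
  set Q : ℝ := Real.exp (-(1/2) * (d ⬝ᵥ (A + B)⁻¹ *ᵥ d)) with hQ
  have step1 : ∀ x : Fin n → ℝ,
      mfg ν μ Sig P U S V R x *
        ((Real.sqrt (p * B.det))⁻¹ *
          Real.exp (-(1/2) * ((y - x - μ') ⬝ᵥ (B⁻¹ *ᵥ (y - x - μ')))))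
      = (c1 * c2 * T * Q) *
          Real.exp (-(1/2) * ((x - (m + w)) ⬝ᵥ C *ᵥ (x - (m + w)))) := by
    intro x
    have hu1 : x - (m + w) = (x - m) - w := by abel
    have hu2 : y - x - μ' = d - (x - m) := by rw [hddef]; abel
    have hq := complete_square hA hB (x - m) d
    rw [← hCdef, ← hwdef] at hq
    have hexp : Real.exp (-(1/2) * ((x - m) ⬝ᵥ A⁻¹ *ᵥ (x - m))) *
        Real.exp (-(1/2) * ((d - (x - m)) ⬝ᵥ B⁻¹ *ᵥ (d - (x - m))))
        = Real.exp (-(1/2) * (((x - m) - w) ⬝ᵥ C *ᵥ ((x - m) - w))) * Q := by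
      rw [hQ, ← Real.exp_add, ← Real.exp_add]
      congr 1
      linear_combination (-(1/2 : ℝ)) * hq
    unfold mfg
    rw [← hAdef, ← hpdef, ← hmdef, ← hTdef, ← hc1, hu1, hu2]
    linear_combination (c1 * c2 * T) * hexp
  rw [← hc2] at step1
  simp only [step1]
  rw [MeasureTheory.integral_const_mul, gauss_int_shift C hCpd (m + w)]
  unfold mfg
  have hS2 : sigmaC (Sig + B) P S = A + B := by
    rw [hAdef, hBdef]; unfold sigmaC; abel
  rw [hS2]
  have hmean : μ + μ' + P.mulVec (nuR U S V R) = m + μ' := by rw [hmdef]; abel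
  rw [hmean]
  have hyd : y - (m + μ') = d := by rw [hddef]; abel
  rw [hyd, ← hpdef, ← hTdef, ← hQ]
  have hdetC : C.det = (A + B).det / (A.det * B.det) := by
    rw [hCdef]; exact det_sumC hA hB
  rw [hdetC]
  have hs := sqrt_combine (p := p) (a := A.det) (b := B.det) (s := (A + B).det)
    hp hA.det_pos hB.det_pos hABpd.det_pos
  rw [hc1, hc2]
  linear_combination ((cF ν (U * S * Vᵀ))⁻¹ * T * Q) * hs

end
end

section
/- Let U, V, U⁺, V⁺, R ∈ SO(3) and let S ∈ ℝ^{3×3} be symmetric. Set Ũ = UᵀU⁺, Ṽ = VᵀV⁺, S̃ = ŨᵀSṼ, Q = UᵀRV, and Q⁺ = (U⁺)ᵀRV⁺. Then (QS − SQᵀ)∨ = Ũ·(Q⁺S̃ᵀ − S̃(Q⁺)ᵀ)∨. (This expresses the tangent deviation ν_R of a prior MFG in terms of the principal axes U⁺, V⁺ of the posterior matrix Fisher parameter.) -/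
open Matrix MeasureTheory Real

noncomputable section

section Stmt14Aux

open Matrix

lemma aux_hat_mulVec_mul (A : Mat3) (v : Fin 3 → ℝ) :
    hat (A *ᵥ v) * A = A.adjugateᵀ * hat v := by
  have hadj := Matrix.adjugate_fin_three A
  ext i j
  fin_cases i <;> fin_cases j <;>
    simp [hat, Matrix.mul_apply, Matrix.mulVec, dotProduct,
      Fin.sum_univ_three, hadj, Matrix.transpose_apply, Matrix.vecHead, Matrix.vecTail] <;> ring

lemma aux_mul_transpose_one {A : Mat3} (h : Aᵀ * A = 1) : A * Aᵀ = 1 :=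
  mul_eq_one_comm.mp h

lemma aux_adjugate_eq_transpose {A : Mat3} (h1 : Aᵀ * A = 1) (h2 : A.det = 1) :
    A.adjugate = Aᵀ := by
  have h := Matrix.mul_adjugate A
  calc A.adjugate = (Aᵀ * A) * A.adjugate := by rw [h1, one_mul]
    _ = Aᵀ * (A * A.adjugate) := by rw [Matrix.mul_assoc]
    _ = Aᵀ := by rw [h, h2, one_smul, Matrix.mul_one]

lemma aux_hat_conj {A : Mat3} (h1 : Aᵀ * A = 1) (h2 : A.det = 1) (v : Fin 3 → ℝ) :
    hat (A *ᵥ v) = A * hat v * Aᵀ := by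
  have h := aux_hat_mulVec_mul A v
  rw [aux_adjugate_eq_transpose h1 h2, Matrix.transpose_transpose] at h
  calc hat (A *ᵥ v) = hat (A *ᵥ v) * (A * Aᵀ) := by
        rw [aux_mul_transpose_one h1, Matrix.mul_one]
    _ = (hat (A *ᵥ v) * A) * Aᵀ := by rw [Matrix.mul_assoc]
    _ = A * hat v * Aᵀ := by rw [h]

lemma aux_vee_hat (v : Fin 3 → ℝ) : vee (hat v) = v := by
  ext i; fin_cases i <;> simp [vee, hat]

lemma aux_hat_vee_of_skew {A : Mat3} (h : Aᵀ = -A) : hat (vee A) = A := by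
  have h00 := congrFun (congrFun h 0) 0
  have h11 := congrFun (congrFun h 1) 1
  have h22 := congrFun (congrFun h 2) 2
  have h01 := congrFun (congrFun h 0) 1
  have h02 := congrFun (congrFun h 0) 2
  have h12 := congrFun (congrFun h 1) 2
  simp [Matrix.transpose_apply] at h00 h11 h22 h01 h02 h12
  ext i j
  fin_cases i <;> fin_cases j <;>
    simp [hat, vee] <;> linarith

end Stmt14Aux


/-- With `Ũ = UᵀU⁺`, `Ṽ = VᵀV⁺`, `S̃ = ŨᵀSṼ`, `Q = UᵀRV`,
`Q⁺ = (U⁺)ᵀRV⁺`, one has `(QS − SQᵀ)∨ = Ũ·(Q⁺S̃ᵀ − S̃(Q⁺)ᵀ)∨`. -/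
theorem stmt14 (U V Up Vp R : Mat3) (hU : U ∈ SO3) (hV : V ∈ SO3)
    (hUp : Up ∈ SO3) (hVp : Vp ∈ SO3) (hR : R ∈ SO3)
    (S : Mat3) (hS : S.IsSymm)
    (Ut Vt St Q Qp : Mat3)
    (hUt : Ut = Uᵀ * Up) (hVt : Vt = Vᵀ * Vp) (hSt : St = Utᵀ * S * Vt)
    (hQ : Q = Uᵀ * R * V) (hQp : Qp = Upᵀ * R * Vp) :
    vee (Q * S - S * Qᵀ) = Ut *ᵥ vee (Qp * Stᵀ - St * Qpᵀ) := by
  have hSsym : Sᵀ = S := hS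
  have hUU : U * Uᵀ = 1 := aux_mul_transpose_one hU.1
  have hVpVp : Vp * Vpᵀ = 1 := aux_mul_transpose_one hVp.1
  -- Ut is in SO3
  have hUt1 : Utᵀ * Ut = 1 := by
    subst hUt
    rw [Matrix.transpose_mul, Matrix.transpose_transpose, Matrix.mul_assoc,
      ← Matrix.mul_assoc U, hUU, Matrix.one_mul, hUp.1]
  have hUt2 : Ut.det = 1 := by
    subst hUt
    rw [Matrix.det_mul, Matrix.det_transpose, hU.2, hUp.2, one_mul]
  have hUtUt : Ut * Utᵀ = 1 := aux_mul_transpose_one hUt1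
  -- the skewness of M = Q*S - S*Qᵀ
  set M : Mat3 := Q * S - S * Qᵀ with hM
  have hskew : Mᵀ = -M := by
    rw [hM, Matrix.transpose_sub, Matrix.transpose_mul, Matrix.transpose_mul,
      Matrix.transpose_transpose, hSsym]
    exact (neg_sub _ _).symm
  -- key identity : Qp * Stᵀ = Utᵀ * (Q * S) * Ut
  have key1 : Qp * Stᵀ = Utᵀ * (Q * S) * Ut := by
    subst hQ hQp hSt hUt hVt
    simp only [Matrix.transpose_mul, Matrix.transpose_transpose, hSsym, ← Matrix.mul_assoc]
    rw [show Upᵀ * R * Vp * Vpᵀ = Upᵀ * R by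
        rw [Matrix.mul_assoc, hVpVp, Matrix.mul_one],
      show Upᵀ * U * Uᵀ = Upᵀ by
        rw [Matrix.mul_assoc, hUU, Matrix.mul_one]]
  have key : Qp * Stᵀ - St * Qpᵀ = Utᵀ * M * Ut := by
    have key2 : St * Qpᵀ = Utᵀ * (S * Qᵀ) * Ut := by
      have := congrArg Matrix.transpose key1
      simpa only [Matrix.transpose_mul, Matrix.transpose_transpose, hSsym,
        Matrix.mul_assoc] using this
    rw [hM, Matrix.mul_sub, Matrix.sub_mul, key1, key2]
  -- finish
  have hconj : Utᵀ * M * Ut = hat (Utᵀ *ᵥ vee M) := by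
    rw [aux_hat_conj (by rwa [Matrix.transpose_transpose]) (by rwa [Matrix.det_transpose]),
      Matrix.transpose_transpose, aux_hat_vee_of_skew hskew]
  rw [key, hconj, aux_vee_hat, Matrix.mulVec_mulVec, hUtUt, Matrix.one_mulVec]


end
end

section
/- Let U', V' ∈ O(3) (real 3×3 matrices with RᵀR = I), let S' = diag(s₁', s₂', s₃'), F = U'S'(V')ᵀ, let a = (a₁,a₂,a₃) ∈ ℝ³ with ‖a‖ = 1, θ ∈ ℝ, and let 𝒟 be a diagonal matrix with diagonal entries in {+1, −1}. Set R = U'·exp(θ·â)·𝒟·(V')ᵀ ∈ O(3), where exp is the matrix exponential. Then tr(FᵀR) = Σ_{i=1}^{3} 𝒟_{ii}·s_i'·(a_i² + (1 − a_i²)·cos θ). Equivalently, tr(FᵀR) = [s₁' s₂' s₃']·𝒟·[a₁² + (a₂²+a₃²)cos θ; a₂² + (a₁²+a₃²)cos θ; a₃² + (a₁²+a₂²)cos θ]. -/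
open Matrix MeasureTheory Real

noncomputable section

lemma pow_odd_of_cube (A : Mat3) (h3 : A ^ 3 = -A) (k : ℕ) :
    A ^ (2 * k + 1) = ((-1 : ℝ) ^ k) • A := by
  induction k with
  | zero => simp
  | succ n ih =>
    have h : 2 * (n + 1) + 1 = (2 * n + 1) + 2 := by ring
    have hA3 : A * A ^ 2 = -A := by
      rw [← pow_succ']; exact h3
    rw [h, pow_add, ih, smul_mul_assoc, pow_succ (-1 : ℝ)]
    rw [show A * A ^ 2 = -A from hA3]
    rw [smul_neg]
    simp [smul_smul, mul_comm]

lemma pow_even_of_cube (A : Mat3) (h3 : A ^ 3 = -A) (k : ℕ) :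
    A ^ (2 * k + 2) = ((-1 : ℝ) ^ k) • A ^ 2 := by
  induction k with
  | zero => simp
  | succ n ih =>
    have h : 2 * (n + 1) + 2 = (2 * n + 2) + 2 := by ring
    have hA4 : A ^ 2 * A ^ 2 = -(A ^ 2) := by
      have h4 : A ^ 2 * A ^ 2 = A ^ 3 * A := by
        rw [← pow_add, ← pow_succ]
      rw [h4, h3, neg_mul, ← sq]
    rw [h, pow_add, ih, smul_mul_assoc, hA4, smul_neg, pow_succ (-1 : ℝ)]
    simp [smul_smul, mul_comm]

set_option maxHeartbeats 1000000 in
lemma rodrigues (A : Mat3) (h3 : A ^ 3 = -A) (θ : ℝ) :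
    NormedSpace.exp (θ • A) =
      1 + Real.sin θ • A + (1 - Real.cos θ) • A ^ 2 := by
  have keyo : ∀ k : ℕ, ((-1 : ℝ) ^ k * θ ^ (2 * k + 1) / (2 * k + 1).factorial) • A
      = (((2 * k + 1).factorial : ℝ))⁻¹ • (θ • A) ^ (2 * k + 1) := by
    intro k
    rw [smul_pow, pow_odd_of_cube A h3, smul_smul, smul_smul]
    congr 1
    field_simp
  have hodd : HasSum (fun k : ℕ => (((2 * k + 1).factorial : ℝ))⁻¹ • (θ • A) ^ (2 * k + 1))
      (Real.sin θ • A) := by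
    exact ((Real.hasSum_sin θ).smul_const A).congr_fun (fun k => (keyo k).symm)
  have hc0 : HasSum (fun k : ℕ => ((-1 : ℝ) ^ k * θ ^ (2 * (k + 1)) / (2 * (k + 1)).factorial))
      (1 - Real.cos θ) := by
    have h1 : HasSum
        (fun n : ℕ => ((-1 : ℝ) ^ (n + 1) * θ ^ (2 * (n + 1)) / (2 * (n + 1)).factorial))
        (Real.cos θ - 1) := by
      refine (hasSum_nat_add_iff
        (f := fun n => ((-1 : ℝ) ^ n * θ ^ (2 * n) / (2 * n).factorial)) 1).mpr ?_
      simpa using Real.hasSum_cos θ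
    have h2 := h1.neg
    rw [neg_sub] at h2
    refine h2.congr_fun fun k => by ring
  have keye : ∀ k : ℕ, ((-1 : ℝ) ^ k * θ ^ (2 * (k + 1)) / (2 * (k + 1)).factorial) • A ^ 2
      = (((2 * (k + 1)).factorial : ℝ))⁻¹ • (θ • A) ^ (2 * (k + 1)) := by
    intro k
    rw [show 2 * (k + 1) = 2 * k + 2 by ring, smul_pow, pow_even_of_cube A h3,
      smul_smul, smul_smul]
    congr 1
    rw [show 2 * k + 2 = 2 * (k + 1) by ring]
    field_simp
  have heven : HasSum (fun k : ℕ => (((2 * k).factorial : ℝ))⁻¹ • (θ • A) ^ (2 * k))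
      (1 + (1 - Real.cos θ) • A ^ 2) := by
    have h2 : HasSum (fun k : ℕ => (((2 * (k + 1)).factorial : ℝ))⁻¹ • (θ • A) ^ (2 * (k + 1)))
        ((1 - Real.cos θ) • A ^ 2) := by
      exact (hc0.smul_const (A ^ 2)).congr_fun (fun k => (keye k).symm)
    have h4 := (hasSum_nat_add_iff
      (f := fun k : ℕ => (((2 * k).factorial : ℝ))⁻¹ • (θ • A) ^ (2 * k)) 1).mp (by exact h2)
    simpa [add_comm] using h4
  have hsum := HasSum.even_add_odd
    (f := fun n : ℕ => ((n.factorial : ℝ))⁻¹ • (θ • A) ^ n) heven hodd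
  rw [NormedSpace.exp_eq_tsum (𝕂 := ℝ)]
  show ∑' (n : ℕ), ((n.factorial : ℝ))⁻¹ • (θ • A) ^ n = _
  rw [hsum.tsum_eq]
  abel

/-- For `U', V' ∈ O(3)`, `S' = diag(s)`, `F = U'S'(V')ᵀ`, unit `a`,
`𝒟` diagonal with entries `±1`, and `R = U'·exp(θâ)·𝒟·(V')ᵀ`,
`tr(FᵀR) = Σᵢ 𝒟ᵢᵢ sᵢ' (aᵢ² + (1 − aᵢ²) cos θ)`. -/
theorem stmt16 (U' V' : Mat3) (hU' : U'ᵀ * U' = 1) (hV' : V'ᵀ * V' = 1)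
    (s a : Fin 3 → ℝ) (ha : a ⬝ᵥ a = 1) (θ : ℝ)
    (d : Fin 3 → ℝ) (hd : ∀ i, d i = 1 ∨ d i = -1)
    (F : Mat3) (hF : F = U' * Matrix.diagonal s * V'ᵀ)
    (R : Mat3)
    (hR : R = U' * NormedSpace.exp (θ • hat a) * Matrix.diagonal d * V'ᵀ) :
    (Fᵀ * R).trace = ∑ i, d i * s i * (a i ^ 2 + (1 - a i ^ 2) * Real.cos θ) := by
  have ha' : a 0 ^ 2 + a 1 ^ 2 + a 2 ^ 2 = 1 := by
    simpa [dotProduct, Fin.sum_univ_three, sq] using ha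
  have h3 : hat a ^ 3 = -(hat a) := by
    ext i j
    fin_cases i <;> fin_cases j <;>
      simp [hat, pow_succ, Matrix.mul_apply, Fin.sum_univ_three] <;>
      first
        | ring1
        | linear_combination (a 0) * ha'
        | linear_combination (-(a 0)) * ha'
        | linear_combination (a 1) * ha'
        | linear_combination (-(a 1)) * ha'
        | linear_combination (a 2) * ha'
        | linear_combination (-(a 2)) * ha'
  have hE := rodrigues (hat a) h3 θ
  subst hF hR
  rw [Matrix.transpose_mul, Matrix.transpose_mul, Matrix.transpose_transpose,
    Matrix.diagonal_transpose]
  simp only [Matrix.mul_assoc]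
  rw [← Matrix.mul_assoc U'ᵀ U', hU', Matrix.one_mul]
  rw [Matrix.trace_mul_comm]
  simp only [Matrix.mul_assoc]
  rw [hV', Matrix.mul_one]
  rw [hE]
  simp [Matrix.trace, Matrix.diag, Matrix.mul_apply, Matrix.diagonal, hat,
    Fin.sum_univ_three, Matrix.one_apply, pow_two]
  first
    | linear_combination ((d 0 * s 0 + d 1 * s 1 + d 2 * s 2) * (1 - Real.cos θ)) * ha'
    | linear_combination (-(d 0 * s 0 + d 1 * s 1 + d 2 * s 2) * (1 - Real.cos θ)) * ha'
    | ring1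

end
end
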